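/- arXiv:math/0608706 — 6 statements merged into one kernel-verified Lean document; each statement's English description precedes it below -/
import Mathlib

section
/- The function x ↦ (e^x - (1 + x))/x^2, extended by the value 1/2 at x = 0, is monotone increasing on the real line. -/
open intervalIntegral

lemma exp_quad_integral_rep (x : ℝ) :
    (if x = 0 then (1 / 2 : ℝ) else (Real.exp x - (1 + x)) / x ^ 2)
      = ∫ t in (0:ℝ)..1, (1 - t) * Real.exp (t * x) := by
  rcases eq_or_ne x 0 with hx | hx
  · subst hx
    simp only [mul_zero, Real.exp_zero, mul_one, if_true]
    rw [intervalIntegral.integral_sub intervalIntegrable_const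
      (intervalIntegral.intervalIntegrable_id)]
    simp
    norm_num
  · rw [if_neg hx]
    have key : ∀ t : ℝ, HasDerivAt
        (fun t : ℝ => (1 - t) * Real.exp (t * x) / x + Real.exp (t * x) / x ^ 2)
        ((1 - t) * Real.exp (t * x)) t := by
      intro t
      have hE : HasDerivAt (fun t : ℝ => Real.exp (t * x)) (Real.exp (t * x) * x) t := by
        simpa using ((hasDerivAt_id t).mul_const x).exp
      have h1 : HasDerivAt (fun t : ℝ => (1 - t) * Real.exp (t * x) / x)
          (((-1) * Real.exp (t * x) + (1 - t) * (Real.exp (t * x) * x)) / x) t := by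
        simpa using (((hasDerivAt_const t (1:ℝ)).sub (hasDerivAt_id t)).mul hE).div_const x
      have h2 : HasDerivAt (fun t : ℝ => Real.exp (t * x) / x ^ 2)
          ((Real.exp (t * x) * x) / x ^ 2) t := hE.div_const _
      have := h1.add h2
      refine this.congr_deriv ?_
      field_simp
      ring
    have hint : ∫ t in (0:ℝ)..1, (1 - t) * Real.exp (t * x)
        = ((1 - 1) * Real.exp (1 * x) / x + Real.exp (1 * x) / x ^ 2)
          - ((1 - 0) * Real.exp (0 * x) / x + Real.exp (0 * x) / x ^ 2) := by
      apply intervalIntegral.integral_eq_sub_of_hasDerivAt (fun t _ => key t)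
      apply Continuous.intervalIntegrable
      fun_prop
    rw [hint]
    simp only [zero_mul, one_mul, Real.exp_zero]
    field_simp
    ring

/-- The function `x ↦ (e^x - (1 + x)) / x^2`, extended by the value `1/2` at `x = 0`,
is monotone increasing on the real line. -/
theorem monotone_exp_quadratic_ratio :
    Monotone (fun x : ℝ =>
      if x = 0 then (1 / 2 : ℝ) else (Real.exp x - (1 + x)) / x ^ 2) := by
  intro a b hab
  simp only [exp_quad_integral_rep]
  apply intervalIntegral.integral_mono_on (by norm_num)
  · exact (by fun_prop : Continuous fun t : ℝ => (1 - t) * Real.exp (t * a)).intervalIntegrable _ _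
  · exact (by fun_prop : Continuous fun t : ℝ => (1 - t) * Real.exp (t * b)).intervalIntegrable _ _
  · intro t ht
    rcases ht with ⟨ht0, ht1⟩
    have h1 : (0:ℝ) ≤ 1 - t := by linarith
    exact mul_le_mul_of_nonneg_left (Real.exp_le_exp.mpr (mul_le_mul_of_nonneg_left hab ht0)) h1
end

section
/- Duality formula for entropy: for a strictly positive integrable random variable G with G log G integrable, the entropy H(G) := E[G log G] - E[G] log E[G] equals the supremum over strictly positive random variables T (with T and G log T integrable) of E[G (log T - log E[T])]. -/
open MeasureTheory Real

lemma int_pos_of_ae_pos {Ω : Type*} [MeasurableSpace Ω] {μ : Measure Ω} [IsProbabilityMeasure μ]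
    {f : Ω → ℝ} (hpos : ∀ᵐ ω ∂μ, 0 < f ω) (hint : Integrable f μ) :
    0 < ∫ ω, f ω ∂μ := by
  rw [integral_pos_iff_support_of_nonneg_ae (hpos.mono fun ω h => h.le) hint]
  have h0 : μ {ω | ¬ 0 < f ω} = 0 := ae_iff.mp hpos
  have hsub : Set.univ ⊆ Function.support f ∪ {ω | ¬ 0 < f ω} := by
    intro ω _
    by_cases h : 0 < f ω
    · exact Or.inl (ne_of_gt h)
    · exact Or.inr h
  have h1 : (1 : ENNReal) ≤ μ (Function.support f) + μ {ω | ¬ 0 < f ω} := by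
    calc (1 : ENNReal) = μ Set.univ := measure_univ.symm
      _ ≤ μ (Function.support f ∪ {ω | ¬ 0 < f ω}) := measure_mono hsub
      _ ≤ _ := measure_union_le _ _
  rw [h0, add_zero] at h1
  exact lt_of_lt_of_le one_pos h1

lemma key_ineq {Ω : Type*} [MeasurableSpace Ω] {μ : Measure Ω} [IsProbabilityMeasure μ]
    {G T : Ω → ℝ} (hGpos : ∀ᵐ ω ∂μ, 0 < G ω) (hGint : Integrable G μ)
    (hGlogint : Integrable (fun ω => G ω * log (G ω)) μ)
    (hTpos : ∀ᵐ ω ∂μ, 0 < T ω) (hTint : Integrable T μ)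
    (hGlogT : Integrable (fun ω => G ω * log (T ω)) μ) :
    ∫ ω, G ω * (log (T ω) - log (∫ ω', T ω' ∂μ)) ∂μ
      ≤ (∫ ω, G ω * log (G ω) ∂μ) - (∫ ω, G ω ∂μ) * log (∫ ω, G ω ∂μ) := by
  set I := ∫ ω, G ω ∂μ with hIdef
  set c := ∫ ω', T ω' ∂μ with hcdef
  have hI : 0 < I := int_pos_of_ae_pos hGpos hGint
  have hc : 0 < c := int_pos_of_ae_pos hTpos hTint
  set f : Ω → ℝ := fun ω => G ω * log (T ω) - G ω * log c - G ω * log (G ω) + G ω * log I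
    with hfdef
  set g : Ω → ℝ := fun ω => T ω * (I / c) - G ω with hgdef
  have hf : Integrable f μ :=
    ((hGlogT.sub (hGint.mul_const (log c))).sub hGlogint).add (hGint.mul_const (log I))
  have hg : Integrable g μ := (hTint.mul_const (I / c)).sub hGint
  have hfg : ∀ᵐ ω ∂μ, f ω ≤ g ω := by
    filter_upwards [hGpos, hTpos] with ω hG hT
    set x : ℝ := T ω * I / (c * G ω) with hxdef
    have hx : 0 < x := by positivity
    have hlog : log x = log (T ω) + log I - (log c + log (G ω)) := by
      rw [hxdef, log_div (by positivity) (by positivity), log_mul hT.ne' hI.ne',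
        log_mul hc.ne' hG.ne']
    have h1 : G ω * log x ≤ G ω * (x - 1) :=
      mul_le_mul_of_nonneg_left (log_le_sub_one_of_pos hx) hG.le
    have h2 : G ω * (x - 1) = T ω * (I / c) - G ω := by
      rw [hxdef]; field_simp
    have h3 : f ω = G ω * log x := by rw [hfdef, hlog]; ring
    rw [h3]; exact h1.trans h2.le
  have hint : ∫ ω, f ω ∂μ ≤ ∫ ω, g ω ∂μ := integral_mono_ae hf hg hfg
  have hgval : ∫ ω, g ω ∂μ = 0 := by
    rw [hgdef]
    simp only
    rw [integral_sub (hTint.mul_const (I / c)) hGint, integral_mul_const]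
    rw [← hcdef, ← hIdef]
    field_simp
    ring
  have hfval : ∫ ω, f ω ∂μ
      = (∫ ω, G ω * log (T ω) ∂μ) - I * log c - (∫ ω, G ω * log (G ω) ∂μ) + I * log I := by
    have hA : Integrable (fun ω => G ω * log (T ω) - G ω * log c) μ := by
      exact hGlogT.sub (hGint.mul_const (log c))
    have hB : Integrable (fun ω => G ω * log (T ω) - G ω * log c - G ω * log (G ω)) μ := by
      exact hA.sub hGlogint
    rw [hfdef]
    simp only
    rw [integral_add hB (hGint.mul_const (log I)), integral_sub hA hGlogint,
      integral_sub hGlogT (hGint.mul_const (log c)), integral_mul_const, integral_mul_const,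
      ← hIdef]
  have hlhs : ∫ ω, G ω * (log (T ω) - log c) ∂μ
      = (∫ ω, G ω * log (T ω) ∂μ) - I * log c := by
    have : (fun ω => G ω * (log (T ω) - log c)) = fun ω => G ω * log (T ω) - G ω * log c := by
      funext ω; ring
    rw [this, integral_sub hGlogT (hGint.mul_const (log c)), integral_mul_const, ← hIdef]
  rw [hfval, hgval] at hint
  rw [hlhs]
  linarith

/-- Duality formula for entropy: for a strictly positive integrable random variable `G` with
`G log G` integrable, the entropy `H(G) = E[G log G] - E[G] log E[G]` equals the supremum over
strictly positive random variables `T` (with `T` and `G log T` integrable) of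
`E[G (log T - log E[T])]`. -/
theorem entropy_duality {Ω : Type*} [MeasurableSpace Ω]
    (μ : Measure Ω) [IsProbabilityMeasure μ]
    (G : Ω → ℝ) (hGmeas : Measurable G) (hGpos : ∀ᵐ ω ∂μ, 0 < G ω)
    (hGint : Integrable G μ)
    (hGlogint : Integrable (fun ω => G ω * log (G ω)) μ) :
    (∫ ω, G ω * log (G ω) ∂μ) - (∫ ω, G ω ∂μ) * log (∫ ω, G ω ∂μ)
      = sSup {y : ℝ | ∃ T : Ω → ℝ, Measurable T ∧ (∀ᵐ ω ∂μ, 0 < T ω) ∧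
          Integrable T μ ∧ Integrable (fun ω => G ω * log (T ω)) μ ∧
          y = ∫ ω, G ω * (log (T ω) - log (∫ ω', T ω' ∂μ)) ∂μ} := by
  set H := (∫ ω, G ω * log (G ω) ∂μ) - (∫ ω, G ω ∂μ) * log (∫ ω, G ω ∂μ) with hHdef
  have hub : ∀ y ∈ {y : ℝ | ∃ T : Ω → ℝ, Measurable T ∧ (∀ᵐ ω ∂μ, 0 < T ω) ∧
      Integrable T μ ∧ Integrable (fun ω => G ω * log (T ω)) μ ∧
      y = ∫ ω, G ω * (log (T ω) - log (∫ ω', T ω' ∂μ)) ∂μ}, y ≤ H := by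
    rintro y ⟨T, _, hTpos, hTint, hGlogT, rfl⟩
    exact key_ineq hGpos hGint hGlogint hTpos hTint hGlogT
  have hmem : H ∈ {y : ℝ | ∃ T : Ω → ℝ, Measurable T ∧ (∀ᵐ ω ∂μ, 0 < T ω) ∧
      Integrable T μ ∧ Integrable (fun ω => G ω * log (T ω)) μ ∧
      y = ∫ ω, G ω * (log (T ω) - log (∫ ω', T ω' ∂μ)) ∂μ} := by
    refine ⟨G, hGmeas, hGpos, hGint, hGlogint, ?_⟩
    have : (fun ω => G ω * (log (G ω) - log (∫ ω', G ω' ∂μ)))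
        = fun ω => G ω * log (G ω) - G ω * log (∫ ω', G ω' ∂μ) := by
      funext ω; ring
    rw [this, integral_sub hGlogint (hGint.mul_const _), integral_mul_const, hHdef]
  exact le_antisymm (le_csSup ⟨H, hub⟩ hmem) (csSup_le ⟨H, hmem⟩ hub)
end

section
/- Tensorization (entropy) inequality: if X_1,...,X_n are independent random variables and G = G(X_1,...,X_n) > 0 with suitable integrability, then H(G) ≤ Σ_{k=1}^n E[H_k(G)], where H_k(G) = E_k[G log G] - E_k[G] log E_k[G] and E_k denotes integration over X_k only. -/
open MeasureTheory Real ProbabilityTheory Filter Topology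

section EntropyAux

set_option linter.unusedSectionVars false
set_option linter.unusedVariables false

variable {Ω : Type*} {m m0 : MeasurableSpace Ω} {μ : Measure Ω} [IsProbabilityMeasure μ]

lemma aux_condexp_pos (hm : m ≤ m0) {G : Ω → ℝ} (hGint : Integrable G μ)
    (hGpos : ∀ᵐ ω ∂μ, 0 < G ω) : ∀ᵐ ω ∂μ, 0 < (μ[G|m]) ω := by
  haveI : IsFiniteMeasure (μ.trim hm) := isFiniteMeasure_trim hm
  have hAnn : 0 ≤ᵐ[μ] μ[G|m] := condExp_nonneg (hGpos.mono fun ω h => h.le)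
  have hAsm : StronglyMeasurable[m] (μ[G|m]) := stronglyMeasurable_condExp
  set s : Set Ω := {ω | (μ[G|m]) ω ≤ 0} with hs_def
  have hs : MeasurableSet[m] s := hAsm.measurable measurableSet_Iic
  have h1 : ∫ ω in s, G ω ∂μ = ∫ ω in s, (μ[G|m]) ω ∂μ := (setIntegral_condExp hm hGint hs).symm
  have h2 : ∫ ω in s, (μ[G|m]) ω ∂μ ≤ 0 := setIntegral_nonpos (hm s hs) (fun ω hω => hω)
  have h3 : 0 ≤ ∫ ω in s, G ω ∂μ :=
    setIntegral_nonneg_of_ae_restrict (ae_restrict_of_ae (hGpos.mono fun ω h => h.le))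
  have h4 : ∫ ω in s, G ω ∂μ = 0 := le_antisymm (h1.trans_le h2) h3
  have h5 : G =ᵐ[μ.restrict s] 0 :=
    (integral_eq_zero_iff_of_nonneg_ae (ae_restrict_of_ae (hGpos.mono fun ω h => h.le))
      hGint.integrableOn).1 h4
  have h6 : μ.restrict s = 0 := by
    rw [← Measure.measure_univ_eq_zero]
    have : ∀ᵐ ω ∂μ.restrict s, False := by
      filter_upwards [ae_restrict_of_ae hGpos, h5] with ω hω h0
      exact absurd h0 hω.ne'
    simpa [ae_iff] using this
  have hμs : μ s = 0 := by
    rwa [Measure.restrict_eq_zero] at h6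
  have : ∀ᵐ ω ∂μ, ω ∉ s := by
    rw [ae_iff]
    simpa using hμs
  filter_upwards [this] with ω hω
  exact lt_of_not_ge hω


lemma aux_lintegral_mul_condExp (hm : m ≤ m0) {f h : Ω → ℝ} (hf : Integrable f μ)
    (hf0 : 0 ≤ᵐ[μ] f) (hh0 : 0 ≤ᵐ[μ] h) (hhm : Measurable[m] h) :
    ∫⁻ ω, ENNReal.ofReal (h ω * f ω) ∂μ = ∫⁻ ω, ENNReal.ofReal (h ω * (μ[f|m]) ω) ∂μ := by
  haveI : IsFiniteMeasure (μ.trim hm) := isFiniteMeasure_trim hm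
  have hcnn : 0 ≤ᵐ[μ] μ[f|m] := condExp_nonneg hf0
  have key : ∀ N : ℕ, ∫⁻ ω, ENNReal.ofReal (min (h ω) N * f ω) ∂μ
      = ∫⁻ ω, ENNReal.ofReal (min (h ω) N * (μ[f|m]) ω) ∂μ := by
    intro N
    have hbdd : ∀ᵐ ω ∂μ, ‖min (h ω) (N : ℝ)‖ ≤ (N : ℝ) := by
      filter_upwards [hh0] with ω h0
      rw [Real.norm_eq_abs, abs_of_nonneg (le_min h0 (Nat.cast_nonneg N))]
      exact min_le_right _ _
    have hsm : StronglyMeasurable[m] (fun ω => min (h ω) (N : ℝ)) :=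
      (hhm.min measurable_const).stronglyMeasurable
    have hce : μ[(fun ω => min (h ω) (N : ℝ)) * f|m]
        =ᵐ[μ] (fun ω => min (h ω) (N : ℝ)) * μ[f|m] :=
      condExp_stronglyMeasurable_mul_of_bound hm hsm hf N hbdd
    have hint1 : Integrable ((fun ω => min (h ω) (N : ℝ)) * f) μ :=
      hf.bdd_mul (hsm.mono hm).aestronglyMeasurable hbdd
    have hint2 : Integrable ((fun ω => min (h ω) (N : ℝ)) * μ[f|m]) μ :=
      integrable_condExp.bdd_mul (hsm.mono hm).aestronglyMeasurable hbdd
    have hI : ∫ ω, min (h ω) (N : ℝ) * f ω ∂μ = ∫ ω, min (h ω) (N : ℝ) * (μ[f|m]) ω ∂μ := by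
      have := integral_condExp hm (f := (fun ω => min (h ω) (N - 0 : ℝ)) * f) (μ := μ)
      calc ∫ ω, min (h ω) (N : ℝ) * f ω ∂μ
          = ∫ ω, (μ[(fun ω => min (h ω) (N : ℝ)) * f|m]) ω ∂μ :=
            (integral_condExp hm).symm
        _ = ∫ ω, min (h ω) (N : ℝ) * (μ[f|m]) ω ∂μ := integral_congr_ae hce
    have e1 : ∫⁻ ω, ENNReal.ofReal (min (h ω) (N : ℝ) * f ω) ∂μ
        = ENNReal.ofReal (∫ ω, min (h ω) (N : ℝ) * f ω ∂μ) := by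
      refine (ofReal_integral_eq_lintegral_ofReal hint1 ?_).symm
      filter_upwards [hf0, hh0] with ω h1 h2
      exact mul_nonneg (le_min h2 (Nat.cast_nonneg N)) h1
    have e2 : ∫⁻ ω, ENNReal.ofReal (min (h ω) (N : ℝ) * (μ[f|m]) ω) ∂μ
        = ENNReal.ofReal (∫ ω, min (h ω) (N : ℝ) * (μ[f|m]) ω ∂μ) := by
      refine (ofReal_integral_eq_lintegral_ofReal hint2 ?_).symm
      filter_upwards [hcnn, hh0] with ω h1 h2
      exact mul_nonneg (le_min h2 (Nat.cast_nonneg N)) h1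
    rw [e1, e2, hI]
  have hmono : ∀ᵐ ω ∂μ, 0 ≤ f ω → Monotone fun N : ℕ => ENNReal.ofReal (min (h ω) N * f ω) := by
    exact Eventually.of_forall fun ω h0 i j hij => ENNReal.ofReal_le_ofReal
      (mul_le_mul_of_nonneg_right (min_le_min le_rfl (Nat.cast_le.2 hij)) h0)
  have htend : ∀ (u : Ω → ℝ), 0 ≤ᵐ[μ] u → ∀ᵐ ω ∂μ, Tendsto
      (fun N : ℕ => ENNReal.ofReal (min (h ω) N * u ω)) atTop
      (𝓝 (ENNReal.ofReal (h ω * u ω))) := by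
    intro u hu
    filter_upwards with ω
    refine tendsto_atTop_of_eventually_const (i₀ := ⌈h ω⌉₊) fun N hN => ?_
    rw [min_eq_left (Nat.ceil_le.1 hN)]
  have hhm0 : AEMeasurable h μ := ((hhm.mono hm le_rfl)).aemeasurable
  have t1 : Tendsto (fun N : ℕ => ∫⁻ ω, ENNReal.ofReal (min (h ω) N * f ω) ∂μ) atTop
      (𝓝 (∫⁻ ω, ENNReal.ofReal (h ω * f ω) ∂μ)) := by
    refine lintegral_tendsto_of_tendsto_of_monotone (fun N => ?_) ?_ (htend f hf0)
    · exact ENNReal.measurable_ofReal.comp_aemeasurable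
        (((hhm0.min aemeasurable_const)).mul hf.aemeasurable)
    · filter_upwards [hf0] with ω h0
      exact fun i j hij => ENNReal.ofReal_le_ofReal
        (mul_le_mul_of_nonneg_right (min_le_min le_rfl (Nat.cast_le.2 hij)) h0)
  have t2 : Tendsto (fun N : ℕ => ∫⁻ ω, ENNReal.ofReal (min (h ω) N * (μ[f|m]) ω) ∂μ) atTop
      (𝓝 (∫⁻ ω, ENNReal.ofReal (h ω * (μ[f|m]) ω) ∂μ)) := by
    refine lintegral_tendsto_of_tendsto_of_monotone (fun N => ?_) ?_ (htend _ hcnn)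
    · exact ENNReal.measurable_ofReal.comp_aemeasurable
        (((hhm0.min aemeasurable_const)).mul integrable_condExp.aemeasurable)
    · filter_upwards [hcnn] with ω h0
      exact fun i j hij => ENNReal.ofReal_le_ofReal
        (mul_le_mul_of_nonneg_right (min_le_min le_rfl (Nat.cast_le.2 hij)) h0)
  exact tendsto_nhds_unique t1 (by simpa only [key] using t2)

lemma aux_pullout (hm : m ≤ m0) {f h : Ω → ℝ} (hf : Integrable f μ) (hf0 : 0 ≤ᵐ[μ] f)
    (hhm : Measurable[m] h)
    (hint : Integrable (fun ω => h ω * (μ[f|m]) ω) μ) :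
    Integrable (fun ω => h ω * f ω) μ ∧
      ∫ ω, h ω * f ω ∂μ = ∫ ω, h ω * (μ[f|m]) ω ∂μ := by
  have hcnn : 0 ≤ᵐ[μ] μ[f|m] := condExp_nonneg hf0
  -- the two nonnegative parts of h
  set hp : Ω → ℝ := fun ω => max (h ω) 0 with hp_def
  set hn : Ω → ℝ := fun ω => max (-h ω) 0 with hn_def
  have hsub : ∀ ω, hp ω - hn ω = h ω := fun ω => max_zero_sub_max_neg_zero_eq_self (h ω)
  have hpm : Measurable[m] hp := hhm.max measurable_const
  have hnm : Measurable[m] hn := hhm.neg.max measurable_const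
  have hp0 : 0 ≤ᵐ[μ] hp := Eventually.of_forall fun ω => le_max_right _ _
  have hn0 : 0 ≤ᵐ[μ] hn := Eventually.of_forall fun ω => le_max_right _ _
  have hpaes : AEStronglyMeasurable hp μ := (hpm.mono hm le_rfl).aestronglyMeasurable
  have hnaes : AEStronglyMeasurable hn μ := (hnm.mono hm le_rfl).aestronglyMeasurable
  -- key finiteness bounds
  have hfin : ∀ (u : Ω → ℝ), Measurable[m] u → 0 ≤ᵐ[μ] u → (∀ ω, u ω ≤ |h ω|) →
      Integrable (fun ω => u ω * f ω) μ ∧ Integrable (fun ω => u ω * (μ[f|m]) ω) μ ∧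
        ∫ ω, u ω * f ω ∂μ = ∫ ω, u ω * (μ[f|m]) ω ∂μ := by
    intro u hum hu0 hub
    have huaes : AEStronglyMeasurable u μ := (hum.mono hm le_rfl).aestronglyMeasurable
    have hlin : ∫⁻ ω, ENNReal.ofReal (u ω * f ω) ∂μ
        = ∫⁻ ω, ENNReal.ofReal (u ω * (μ[f|m]) ω) ∂μ :=
      aux_lintegral_mul_condExp hm hf hf0 hu0 hum
    have hfin2 : ∫⁻ ω, ENNReal.ofReal (u ω * (μ[f|m]) ω) ∂μ < ⊤ := by
      refine lt_of_le_of_lt (lintegral_mono_ae ?_) hint.2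
      filter_upwards [hcnn] with ω h0
      calc ENNReal.ofReal (u ω * (μ[f|m]) ω)
          ≤ ENNReal.ofReal (|h ω| * (μ[f|m]) ω) :=
            ENNReal.ofReal_le_ofReal (mul_le_mul_of_nonneg_right (hub ω) h0)
        _ ≤ ENNReal.ofReal (|h ω * (μ[f|m]) ω|) := by
            rw [abs_mul, abs_of_nonneg h0]
        _ = ‖h ω * (μ[f|m]) ω‖ₑ := (Real.enorm_eq_ofReal_abs _).symm
    have hiu : Integrable (fun ω => u ω * f ω) μ := by
      refine ⟨huaes.mul hf.aestronglyMeasurable, ?_⟩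
      rw [hasFiniteIntegral_iff_ofReal ?_]
      · exact hlin ▸ hfin2
      · filter_upwards [hf0, hu0] with ω h1 h2; exact mul_nonneg h2 h1
    have hiu' : Integrable (fun ω => u ω * (μ[f|m]) ω) μ := by
      refine ⟨huaes.mul (stronglyMeasurable_condExp.mono hm).aestronglyMeasurable, ?_⟩
      rw [hasFiniteIntegral_iff_ofReal ?_]
      · exact hfin2
      · filter_upwards [hcnn, hu0] with ω h1 h2; exact mul_nonneg h2 h1
    refine ⟨hiu, hiu', ?_⟩
    have i1 : ∫ ω, u ω * f ω ∂μ = (∫⁻ ω, ENNReal.ofReal (u ω * f ω) ∂μ).toReal := by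
      have hnn : 0 ≤ᵐ[μ] fun ω => u ω * f ω := by
        filter_upwards [hf0, hu0] with ω h1 h2; exact mul_nonneg h2 h1
      exact integral_eq_lintegral_of_nonneg_ae hnn (huaes.mul hf.aestronglyMeasurable)
    have i2 : ∫ ω, u ω * (μ[f|m]) ω ∂μ
        = (∫⁻ ω, ENNReal.ofReal (u ω * (μ[f|m]) ω) ∂μ).toReal := by
      have hnn : 0 ≤ᵐ[μ] fun ω => u ω * (μ[f|m]) ω := by
        filter_upwards [hcnn, hu0] with ω h1 h2; exact mul_nonneg h2 h1
      exact integral_eq_lintegral_of_nonneg_ae hnn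
        (huaes.mul (stronglyMeasurable_condExp.mono hm).aestronglyMeasurable)
    rw [i1, i2, hlin]
  have hP := hfin hp hpm hp0 (fun ω => by
    rw [hp_def]; exact max_le (le_abs_self _) (abs_nonneg _))
  have hN := hfin hn hnm hn0 (fun ω => by
    rw [hn_def]; exact max_le (neg_le_abs _) (abs_nonneg _))
  have e : ∀ v : Ω → ℝ, (fun ω => h ω * v ω) = fun ω => hp ω * v ω - hn ω * v ω := fun v =>
    funext fun ω => by rw [← hsub ω]; ring
  constructor
  · rw [e f]; exact hP.1.sub hN.1
  · rw [e f, e (μ[f|m]), integral_sub hP.1 hN.1, integral_sub hP.2.1 hN.2.1, hP.2.2, hN.2.2]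

lemma aux_entropy_integrable (hm : m ≤ m0) {G : Ω → ℝ} (hGint : Integrable G μ)
    (hGpos : ∀ᵐ ω ∂μ, 0 < G ω)
    (hφG : Integrable (fun ω => G ω * Real.log (G ω)) μ) :
    Integrable (fun ω => (μ[G|m]) ω * Real.log ((μ[G|m]) ω)) μ := by
  haveI : IsFiniteMeasure (μ.trim hm) := isFiniteMeasure_trim hm
  have hpos : ∀ᵐ ω ∂μ, 0 < (μ[G|m]) ω := aux_condexp_pos hm hGint hGpos
  have tangent : ∀ q : ℚ, 0 < (q : ℝ) →
      (∀ᵐ ω ∂μ, (Real.log q + 1) * (μ[G|m]) ω - q ≤ (μ[fun ω => G ω * Real.log (G ω)|m]) ω) := by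
    intro q hq
    have hple : ∀ᵐ ω ∂μ, (Real.log q + 1) * G ω - q ≤ G ω * Real.log (G ω) := by
      filter_upwards [hGpos] with ω h0
      have h1 : Real.log (q / G ω) ≤ q / G ω - 1 :=
        Real.log_le_sub_one_of_pos (by positivity)
      rw [Real.log_div (ne_of_gt hq) (ne_of_gt h0)] at h1
      have h2 := mul_le_mul_of_nonneg_left h1 h0.le
      have h3 : G ω * (q / G ω - 1) = q - G ω := by field_simp
      nlinarith
    have hci : Integrable (fun ω => (Real.log q + 1) * G ω - q) μ :=
      (hGint.const_mul _).sub (integrable_const _)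
    have hmono := condExp_mono (m := m) hci hφG hple
    have h4 : μ[fun ω => (Real.log q + 1) * G ω|m]
        =ᵐ[μ] fun ω => (Real.log q + 1) * (μ[G|m]) ω := by
      exact condExp_smul (m := m) (μ := μ) ((Real.log q + 1) : ℝ) G
    have h5 : μ[fun ω => (Real.log q + 1) * G ω - q|m]
        =ᵐ[μ] fun ω => (Real.log q + 1) * (μ[G|m]) ω - q := by
      refine (condExp_sub (hGint.const_mul _) (integrable_const _) m).trans ?_
      have h6 : μ[fun _ : Ω => (q : ℝ)|m] = fun _ => (q : ℝ) := condExp_const hm _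
      filter_upwards [h4] with ω hω
      simp only [Pi.sub_apply, hω, h6]
    filter_upwards [hmono, h5] with ω h1 h2
    rw [← h2]; exact h1
  have hall : ∀ᵐ ω ∂μ, ∀ q : ℚ, 0 < (q : ℝ) →
      (Real.log q + 1) * (μ[G|m]) ω - q ≤ (μ[fun ω => G ω * Real.log (G ω)|m]) ω := by
    rw [ae_all_iff]
    intro q
    by_cases hq : 0 < (q : ℝ)
    · filter_upwards [tangent q hq] with ω h _; exact h
    · filter_upwards with ω h; exact absurd h hq
  have hjen : ∀ᵐ ω ∂μ, (μ[G|m]) ω * Real.log ((μ[G|m]) ω)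
      ≤ (μ[fun ω => G ω * Real.log (G ω)|m]) ω := by
    filter_upwards [hall, hpos] with ω h1 h2
    set A := (μ[G|m]) ω
    set R := (μ[fun ω => G ω * Real.log (G ω)|m]) ω
    by_contra hcon
    push_neg at hcon
    obtain ⟨q, hq1, hq2⟩ := exists_rat_btwn (lt_add_of_pos_right A (sub_pos.2 hcon))
    have hq0 : 0 < (q : ℝ) := h2.trans hq1
    have hkey := h1 q hq0
    have hlogle : Real.log A ≤ Real.log q := (Real.log_le_log_iff h2 hq0).2 hq1.le
    have : A * Real.log A ≤ A * Real.log q := mul_le_mul_of_nonneg_left hlogle h2.le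
    nlinarith
  have hlb : ∀ᵐ ω ∂μ, -1 ≤ (μ[G|m]) ω * Real.log ((μ[G|m]) ω) := by
    filter_upwards [hpos] with ω h0
    have h1 : Real.log ((μ[G|m]) ω)⁻¹ ≤ ((μ[G|m]) ω)⁻¹ - 1 :=
      Real.log_le_sub_one_of_pos (by positivity)
    rw [Real.log_inv] at h1
    have h2 := mul_le_mul_of_nonneg_left h1 h0.le
    have h3 : (μ[G|m]) ω * (((μ[G|m]) ω)⁻¹ - 1) = 1 - (μ[G|m]) ω := by field_simp
    nlinarith
  refine Integrable.mono' (g := fun ω => |(μ[fun ω => G ω * Real.log (G ω)|m]) ω| + 1)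
    (integrable_condExp.abs.add (integrable_const 1)) ?_ ?_
  · exact ((stronglyMeasurable_condExp.mono hm).measurable.mul
      (stronglyMeasurable_condExp.mono hm).measurable.log).aestronglyMeasurable
  · filter_upwards [hjen, hlb] with ω h1 h2
    rw [Real.norm_eq_abs, abs_le]
    constructor
    · linarith [abs_nonneg ((μ[fun ω => G ω * Real.log (G ω)|m]) ω)]
    · exact h1.trans ((le_abs_self _).trans (by linarith))

lemma aux_step {m₁ m₂ m₃ : MeasurableSpace Ω} (hm₁ : m₁ ≤ m0) (hm₂ : m₂ ≤ m0) (hm₃ : m₃ ≤ m0)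
    (h₂₃ : m₂ ≤ m₃) {G : Ω → ℝ} (hGint : Integrable G μ) (hGpos : ∀ᵐ ω ∂μ, 0 < G ω)
    (hφG : Integrable (fun ω => G ω * Real.log (G ω)) μ)
    (hAB : μ[μ[G|m₁]|m₃] =ᵐ[μ] μ[G|m₂]) :
    ∫ ω, (μ[G|m₁]) ω * Real.log ((μ[G|m₁]) ω) ∂μ
        - ∫ ω, (μ[G|m₂]) ω * Real.log ((μ[G|m₂]) ω) ∂μ
      ≤ ∫ ω, G ω * Real.log (G ω) ∂μ
        - ∫ ω, (μ[G|m₃]) ω * Real.log ((μ[G|m₃]) ω) ∂μ := by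
  have hG0 : 0 ≤ᵐ[μ] G := hGpos.mono fun ω h => h.le
  have hApos := aux_condexp_pos hm₁ hGint hGpos
  have hBpos := aux_condexp_pos hm₂ hGint hGpos
  have hDpos := aux_condexp_pos hm₃ hGint hGpos
  have hφA := aux_entropy_integrable hm₁ hGint hGpos hφG
  have hφB := aux_entropy_integrable hm₂ hGint hGpos hφG
  have hφD := aux_entropy_integrable hm₃ hGint hGpos hφG
  -- pull-out for the three logarithms
  have hPA' := aux_pullout hm₁ hGint hG0
    (m := m₁) (h := fun ω => Real.log ((μ[G|m₁]) ω))
    (stronglyMeasurable_condExp.measurable.log)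
    (hφA.congr (Eventually.of_forall fun ω => (mul_comm _ _)))
  have hPA1 : Integrable (fun ω => Real.log ((μ[G|m₁]) ω) * G ω) μ := hPA'.1
  have hPA2 : ∫ ω, Real.log ((μ[G|m₁]) ω) * G ω ∂μ
      = ∫ ω, Real.log ((μ[G|m₁]) ω) * (μ[G|m₁]) ω ∂μ := hPA'.2
  have hPB' := aux_pullout hm₂ hGint hG0
    (m := m₂) (h := fun ω => Real.log ((μ[G|m₂]) ω))
    (stronglyMeasurable_condExp.measurable.log)
    (hφB.congr (Eventually.of_forall fun ω => (mul_comm _ _)))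
  have hPB1 : Integrable (fun ω => Real.log ((μ[G|m₂]) ω) * G ω) μ := hPB'.1
  have hPB2 : ∫ ω, Real.log ((μ[G|m₂]) ω) * G ω ∂μ
      = ∫ ω, Real.log ((μ[G|m₂]) ω) * (μ[G|m₂]) ω ∂μ := hPB'.2
  have hPD' := aux_pullout hm₃ hGint hG0
    (m := m₃) (h := fun ω => Real.log ((μ[G|m₃]) ω))
    (stronglyMeasurable_condExp.measurable.log)
    (hφD.congr (Eventually.of_forall fun ω => (mul_comm _ _)))
  have hPD1 : Integrable (fun ω => Real.log ((μ[G|m₃]) ω) * G ω) μ := hPD'.1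
  have hPD2 : ∫ ω, Real.log ((μ[G|m₃]) ω) * G ω ∂μ
      = ∫ ω, Real.log ((μ[G|m₃]) ω) * (μ[G|m₃]) ω ∂μ := hPD'.2
  -- pull-out for the ratio
  have hDB : Measurable[m₃] (fun ω => (μ[G|m₃]) ω / (μ[G|m₂]) ω) :=
    stronglyMeasurable_condExp.measurable.div
      (stronglyMeasurable_condExp.mono h₂₃).measurable
  have he : (fun ω => (μ[G|m₃]) ω) =ᵐ[μ]
      fun ω => ((μ[G|m₃]) ω / (μ[G|m₂]) ω) * (μ[μ[G|m₁]|m₃]) ω := by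
    filter_upwards [hAB, hBpos] with ω h1 h2
    rw [h1, div_mul_cancel₀ _ h2.ne']
  have hPR' := aux_pullout hm₃ (f := μ[G|m₁])
    (h := fun ω => (μ[G|m₃]) ω / (μ[G|m₂]) ω) integrable_condExp
    (condExp_nonneg hG0) hDB (integrable_condExp.congr he)
  have hPR1 : Integrable (fun ω => ((μ[G|m₃]) ω / (μ[G|m₂]) ω) * (μ[G|m₁]) ω) μ := hPR'.1
  have hPR2 : ∫ ω, ((μ[G|m₃]) ω / (μ[G|m₂]) ω) * (μ[G|m₁]) ω ∂μ
      = ∫ ω, ((μ[G|m₃]) ω / (μ[G|m₂]) ω) * (μ[μ[G|m₁]|m₃]) ω ∂μ := hPR'.2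
  have hIR : ∫ ω, ((μ[G|m₃]) ω / (μ[G|m₂]) ω) * (μ[G|m₁]) ω ∂μ = ∫ ω, G ω ∂μ := by
    rw [hPR2, ← integral_congr_ae he, integral_condExp hm₃]
  -- the pointwise inequality
  have hle : ∀ᵐ ω ∂μ, G ω * (Real.log ((μ[G|m₁]) ω) - Real.log ((μ[G|m₂]) ω)
      - Real.log (G ω) + Real.log ((μ[G|m₃]) ω))
      ≤ ((μ[G|m₃]) ω / (μ[G|m₂]) ω) * (μ[G|m₁]) ω - G ω := by
    filter_upwards [hApos, hBpos, hDpos, hGpos] with ω hA hB hD hG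
    set a := (μ[G|m₁]) ω with ha
    set b := (μ[G|m₂]) ω with hb
    set d := (μ[G|m₃]) ω with hd
    set x := G ω with hxx
    have hnum : 0 < a * d := mul_pos hA hD
    have hden : 0 < b * x := mul_pos hB hG
    have hx0 : 0 < a * d / (b * x) := div_pos hnum hden
    have hlogx : Real.log (a * d / (b * x)) ≤ a * d / (b * x) - 1 :=
      Real.log_le_sub_one_of_pos hx0
    have hlx : Real.log (a * d / (b * x)) = Real.log a - Real.log b - Real.log x
        + Real.log d := by
      rw [Real.log_div hnum.ne' hden.ne',
        Real.log_mul hA.ne' hD.ne', Real.log_mul hB.ne' hG.ne']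
      ring
    have h2 : x * Real.log (a * d / (b * x)) ≤ x * (a * d / (b * x) - 1) :=
      mul_le_mul_of_nonneg_left hlogx hG.le
    have h3 : x * (a * d / (b * x) - 1) = (d / b) * a - x := by
      field_simp
    rw [← hlx]
    linarith
  -- integrability of the left side
  have hint1 : Integrable (fun ω => G ω * (Real.log ((μ[G|m₁]) ω)
      - Real.log ((μ[G|m₂]) ω) - Real.log (G ω) + Real.log ((μ[G|m₃]) ω))) μ := by
    have e : (fun ω => G ω * (Real.log ((μ[G|m₁]) ω) - Real.log ((μ[G|m₂]) ω)
        - Real.log (G ω) + Real.log ((μ[G|m₃]) ω)))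
        = fun ω => Real.log ((μ[G|m₁]) ω) * G ω - Real.log ((μ[G|m₂]) ω) * G ω
          - G ω * Real.log (G ω) + Real.log ((μ[G|m₃]) ω) * G ω :=
      funext fun ω => by ring
    have h1 : Integrable (fun ω => Real.log ((μ[G|m₁]) ω) * G ω
        - Real.log ((μ[G|m₂]) ω) * G ω) μ := hPA1.sub hPB1
    have h2 : Integrable (fun ω => Real.log ((μ[G|m₁]) ω) * G ω
        - Real.log ((μ[G|m₂]) ω) * G ω - G ω * Real.log (G ω)) μ := h1.sub hφG
    rw [e]
    exact h2.add hPD1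
  have hgi : Integrable (fun ω => ((μ[G|m₃]) ω / (μ[G|m₂]) ω) * (μ[G|m₁]) ω - G ω) μ :=
    hPR1.sub hGint
  have hIle := integral_mono_ae hint1 hgi hle
  -- compute both sides
  have hR : ∫ ω, (((μ[G|m₃]) ω / (μ[G|m₂]) ω) * (μ[G|m₁]) ω - G ω) ∂μ = 0 := by
    rw [integral_sub hPR1 hGint, hIR, sub_self]
  have hL : ∫ ω, G ω * (Real.log ((μ[G|m₁]) ω) - Real.log ((μ[G|m₂]) ω)
      - Real.log (G ω) + Real.log ((μ[G|m₃]) ω)) ∂μ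
      = ∫ ω, (μ[G|m₁]) ω * Real.log ((μ[G|m₁]) ω) ∂μ
        - ∫ ω, (μ[G|m₂]) ω * Real.log ((μ[G|m₂]) ω) ∂μ
        - ∫ ω, G ω * Real.log (G ω) ∂μ
        + ∫ ω, (μ[G|m₃]) ω * Real.log ((μ[G|m₃]) ω) ∂μ := by
    have e : (fun ω => G ω * (Real.log ((μ[G|m₁]) ω) - Real.log ((μ[G|m₂]) ω)
        - Real.log (G ω) + Real.log ((μ[G|m₃]) ω)))
        = fun ω => Real.log ((μ[G|m₁]) ω) * G ω - Real.log ((μ[G|m₂]) ω) * G ω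
          - G ω * Real.log (G ω) + Real.log ((μ[G|m₃]) ω) * G ω :=
      funext fun ω => by ring
    have hi12 : Integrable (fun ω => Real.log ((μ[G|m₁]) ω) * G ω
        - Real.log ((μ[G|m₂]) ω) * G ω) μ := hPA1.sub hPB1
    have hi123 : Integrable (fun ω => Real.log ((μ[G|m₁]) ω) * G ω
        - Real.log ((μ[G|m₂]) ω) * G ω - G ω * Real.log (G ω)) μ := hi12.sub hφG
    rw [e, integral_add hi123 hPD1, integral_sub hi12 hφG, integral_sub hPA1 hPB1]
    have eA : ∫ ω, Real.log ((μ[G|m₁]) ω) * G ω ∂μ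
        = ∫ ω, (μ[G|m₁]) ω * Real.log ((μ[G|m₁]) ω) ∂μ := by
      rw [hPA2]
      exact integral_congr_ae (Eventually.of_forall fun ω => mul_comm _ _)
    have eB : ∫ ω, Real.log ((μ[G|m₂]) ω) * G ω ∂μ
        = ∫ ω, (μ[G|m₂]) ω * Real.log ((μ[G|m₂]) ω) ∂μ := by
      rw [hPB2]
      exact integral_congr_ae (Eventually.of_forall fun ω => mul_comm _ _)
    have eD : ∫ ω, Real.log ((μ[G|m₃]) ω) * G ω ∂μ
        = ∫ ω, (μ[G|m₃]) ω * Real.log ((μ[G|m₃]) ω) ∂μ := by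
      rw [hPD2]
      exact integral_congr_ae (Eventually.of_forall fun ω => mul_comm _ _)
    rw [eA, eB, eD]
  rw [hL, hR] at hIle
  linarith

end EntropyAux

section EntropyAux2

set_option linter.unusedSectionVars false
set_option linter.unusedVariables false

variable {Ω : Type*} {mA mB mC m₁ m₂ m₃ m0 : MeasurableSpace Ω} {μ : Measure Ω}
  [IsProbabilityMeasure μ]

lemma aux_condexp_collapse (hmA : mA ≤ m0) (hmB : mB ≤ m0)
    (hmC : mC ≤ m0) (hBA : mB ≤ mA) (hindep : Indep mA mC μ)
    {f : Ω → ℝ} (hf : Integrable f μ) (hfm : StronglyMeasurable[mA] f) :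
    μ[f|mB ⊔ mC] =ᵐ[μ] μ[f|mB] := by
  have hmBC : mB ⊔ mC ≤ m0 := sup_le hmB hmC
  haveI : IsFiniteMeasure (μ.trim hmBC) := isFiniteMeasure_trim _
  haveI : IsFiniteMeasure (μ.trim hmB) := isFiniteMeasure_trim _
  -- product rule for independent pieces
  have key : ∀ (u : Ω → ℝ), Integrable u μ → StronglyMeasurable[mA] u →
      ∀ {B C : Set Ω}, MeasurableSet[mB] B → MeasurableSet[mC] C →
      ∫ ω in B ∩ C, u ω ∂μ = (μ C).toReal * ∫ ω in B, u ω ∂μ := by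
    intro u hu hum B C hB hC
    have humeas : Measurable[mA] (Set.indicator B u) :=
      hum.measurable.indicator (hBA _ hB)
    have hw : Measurable[mC] (Set.indicator C (fun _ => (1 : ℝ))) :=
      measurable_const.indicator hC
    have hIF : IndepFun (Set.indicator C (fun _ => (1 : ℝ))) (Set.indicator B u) μ := by
      rw [IndepFun_iff_Indep]
      exact indep_of_indep_of_le_right
        (indep_of_indep_of_le_left hindep.symm hw.comap_le) humeas.comap_le
    have hi1 : Integrable (Set.indicator C fun _ => (1 : ℝ)) μ :=
      (integrable_const 1).indicator (hmC _ hC)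
    have hi2 : Integrable (Set.indicator B u) μ := hu.indicator (hmB _ hB)
    have hmul := IndepFun.integral_mul_eq_mul_integral hIF hi1.aestronglyMeasurable hi2.aestronglyMeasurable
    have hptw : (Set.indicator C (fun _ => (1 : ℝ))) * (Set.indicator B u)
        = Set.indicator (B ∩ C) u := by
      funext ω
      by_cases h1 : ω ∈ C <;> by_cases h2 : ω ∈ B <;>
        simp [Set.indicator_of_mem, Set.indicator_of_notMem, h1, h2, Set.mem_inter_iff]
    calc ∫ ω in B ∩ C, u ω ∂μ = ∫ ω, Set.indicator (B ∩ C) u ω ∂μ := by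
          rw [integral_indicator ((hmB _ hB).inter (hmC _ hC))]
      _ = ∫ ω, ((Set.indicator C (fun _ => (1 : ℝ))) * (Set.indicator B u)) ω ∂μ := by
          rw [hptw]
      _ = (∫ ω, Set.indicator C (fun _ => (1 : ℝ)) ω ∂μ) * ∫ ω, Set.indicator B u ω ∂μ :=
          hmul
      _ = (μ C).toReal * ∫ ω in B, u ω ∂μ := by
          rw [integral_indicator (hmC _ hC), integral_indicator (hmB _ hB),
            setIntegral_const, smul_eq_mul, mul_one]
          rfl
  -- the generating π-system
  set S : Set (Set Ω) :=
    {t | ∃ B C : Set Ω, MeasurableSet[mB] B ∧ MeasurableSet[mC] C ∧ t = B ∩ C} with hS_def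
  have hgen : (mB ⊔ mC : MeasurableSpace Ω) = MeasurableSpace.generateFrom S := by
    refine le_antisymm (sup_le ?_ ?_) (MeasurableSpace.generateFrom_le ?_)
    · exact fun t ht => MeasurableSpace.measurableSet_generateFrom
        ⟨t, Set.univ, ht, MeasurableSet.univ, (Set.inter_univ t).symm⟩
    · exact fun t ht => MeasurableSpace.measurableSet_generateFrom
        ⟨Set.univ, t, MeasurableSet.univ, ht, (Set.univ_inter t).symm⟩
    · rintro t ⟨B, C, hB, hC, rfl⟩
      exact (le_sup_left (b := mC) _ hB).inter (le_sup_right (a := mB) _ hC)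
  have hpi : IsPiSystem S := by
    rintro t1 ⟨B1, C1, hB1, hC1, rfl⟩ t2 ⟨B2, C2, hB2, hC2, rfl⟩ _
    exact ⟨B1 ∩ B2, C1 ∩ C2, hB1.inter hB2, hC1.inter hC2,
      Set.inter_inter_inter_comm B1 C1 B2 C2⟩
  have main : ∀ s, MeasurableSet[mB ⊔ mC] s →
      ∫ ω in s, (μ[f|mB]) ω ∂μ = ∫ ω in s, f ω ∂μ := by
    intro s hs
    refine MeasurableSpace.induction_on_inter (m := mB ⊔ mC)
      (C := fun t _ => ∫ ω in t, (μ[f|mB]) ω ∂μ = ∫ ω in t, f ω ∂μ)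
      hgen hpi ?_ ?_ ?_ ?_ s hs
    · simp
    · rintro t ⟨B, C, hB, hC, rfl⟩
      rw [key f hf hfm hB hC,
        key (μ[f|mB]) integrable_condExp (stronglyMeasurable_condExp.mono hBA) hB hC,
        setIntegral_condExp hmB hf hB]
    · intro t ht hind
      have ht0 : MeasurableSet t := hmBC _ ht
      have e1 := integral_add_compl ht0 (integrable_condExp (m := mB) (f := f) (μ := μ))
      have e2 := integral_add_compl ht0 hf
      have e3 : ∫ ω, (μ[f|mB]) ω ∂μ = ∫ ω, f ω ∂μ := integral_condExp hmB
      linarith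
    · intro g hdisj hmeas hind
      have hg0 : ∀ i, MeasurableSet (g i) := fun i => hmBC _ (hmeas i)
      rw [integral_iUnion hg0 hdisj integrable_condExp.integrableOn,
        integral_iUnion hg0 hdisj hf.integrableOn]
      exact tsum_congr hind
  exact (ae_eq_condExp_of_forall_setIntegral_eq hmBC hf
    (fun s _ _ => integrable_condExp.integrableOn)
    (fun s hs _ => main s hs)
    (StronglyMeasurable.aestronglyMeasurable (stronglyMeasurable_condExp.mono le_sup_left))).symm

lemma aux_step2 (hmA : mA ≤ m0) (hmB : mB ≤ m0) (hmC : mC ≤ m0) (hmD : m₃ ≤ m0)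
    (hBA : mB ≤ mA) (hindep : Indep mA mC μ) (hD : m₃ = mB ⊔ mC)
    {G : Ω → ℝ} (hGint : Integrable G μ) (hGpos : ∀ᵐ ω ∂μ, 0 < G ω)
    (hφG : Integrable (fun ω => G ω * Real.log (G ω)) μ) :
    ∫ ω, (μ[G|mA]) ω * Real.log ((μ[G|mA]) ω) ∂μ
        - ∫ ω, (μ[G|mB]) ω * Real.log ((μ[G|mB]) ω) ∂μ
      ≤ ∫ ω, G ω * Real.log (G ω) ∂μ
        - ∫ ω, (μ[G|m₃]) ω * Real.log ((μ[G|m₃]) ω) ∂μ := by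
  haveI : IsFiniteMeasure (μ.trim hmA) := isFiniteMeasure_trim _
  have hcol := aux_condexp_collapse hmA hmB hmC hBA hindep
    (integrable_condExp (f := G)) (stronglyMeasurable_condExp)
  have htower : μ[μ[G|mA]|mB] =ᵐ[μ] μ[G|mB] := condExp_condExp_of_le hBA hmA
  have hAB : μ[μ[G|mA]|m₃] =ᵐ[μ] μ[G|mB] := by
    rw [hD]
    exact hcol.trans htower
  have h₂₃ : mB ≤ m₃ := by rw [hD]; exact le_sup_left
  exact aux_step hmA hmB hmD h₂₃ hGint hGpos hφG hAB

end EntropyAux2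

/-- Tensorization (entropy) inequality: if `X_1, …, X_n` are independent random variables and
`G = g(X_1, …, X_n) > 0` with suitable integrability, then
`H(G) ≤ ∑ k, E[H_k(G)]`, where `H_k(G) = E_k[G log G] - E_k[G] log E_k[G]` and `E_k` is the
conditional expectation given the σ-algebra generated by all variables except `X_k`. -/
theorem entropy_tensorization {Ω : Type*} [MeasurableSpace Ω]
    (μ : Measure Ω) [IsProbabilityMeasure μ]
    {n : ℕ} {𝓧 : Fin n → Type*} [∀ k, MeasurableSpace (𝓧 k)]
    (X : ∀ k, Ω → 𝓧 k) (hXmeas : ∀ k, Measurable (X k))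
    (hXindep : iIndepFun X μ)
    (g : (∀ k, 𝓧 k) → ℝ) (hgmeas : Measurable g)
    (G : Ω → ℝ) (hG : G = fun ω => g (fun k => X k ω))
    (hGpos : ∀ᵐ ω ∂μ, 0 < G ω)
    (hGint : Integrable G μ)
    (hGlogint : Integrable (fun ω => G ω * log (G ω)) μ)
    -- `m k` is the σ-algebra generated by the variables `X_j`, `j ≠ k`
    (m : Fin n → MeasurableSpace Ω)
    (hm : ∀ k, m k = ⨆ (j : Fin n) (_ : j ≠ k), MeasurableSpace.comap (X j) inferInstance) :
    (∫ ω, G ω * log (G ω) ∂μ) - (∫ ω, G ω ∂μ) * log (∫ ω, G ω ∂μ)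
      ≤ ∑ k : Fin n,
          ∫ ω, (MeasureTheory.condExp (m k) μ (fun ω' => G ω' * log (G ω')) ω
            - MeasureTheory.condExp (m k) μ G ω
              * log (MeasureTheory.condExp (m k) μ G ω)) ∂μ := by
  classical
  set 𝒢 : ℕ → MeasurableSpace Ω := fun t =>
    ⨆ (j : Fin n) (_ : t ≤ (j : ℕ)), MeasurableSpace.comap (X j) inferInstance with h𝒢
  have h𝒢le : ∀ t, 𝒢 t ≤ ‹MeasurableSpace Ω› :=
    fun t => iSup₂_le fun j _ => (hXmeas j).comap_le
  have h𝒢mono : ∀ t : ℕ, 𝒢 (t + 1) ≤ 𝒢 t := fun t =>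
    iSup₂_le fun j hj => le_iSup₂ (f := fun (j : Fin n) (_ : t ≤ (j : ℕ)) =>
      MeasurableSpace.comap (X j) inferInstance) j (by omega)
  have hmle : ∀ k, m k ≤ ‹MeasurableSpace Ω› := fun k => by
    rw [hm k]; exact iSup₂_le fun j _ => (hXmeas j).comap_le
  -- G is measurable w.r.t. 𝒢 0
  have hcomap : MeasurableSpace.comap (fun ω => fun k => X k ω)
      MeasurableSpace.pi ≤ 𝒢 0 := by
    rw [MeasurableSpace.pi, MeasurableSpace.comap_iSup]
    refine iSup_le fun k => ?_
    rw [MeasurableSpace.comap_comp]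
    exact le_iSup₂ (f := fun (j : Fin n) (_ : 0 ≤ (j : ℕ)) =>
      MeasurableSpace.comap (X j) inferInstance) k (Nat.zero_le _)
  have hπ : Measurable[𝒢 0] (fun ω => fun k => X k ω) :=
    measurable_iff_comap_le.mpr hcomap
  have hGsm : StronglyMeasurable[𝒢 0] G := by
    rw [hG]
    exact hgmeas.stronglyMeasurable.comp_measurable hπ
  haveI : IsFiniteMeasure (μ.trim (h𝒢le 0)) := isFiniteMeasure_trim _
  have hend0 : μ[G|𝒢 0] = G := condExp_of_stronglyMeasurable (h𝒢le 0) hGsm hGint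
  have h𝒢n : 𝒢 n = ⊥ := by
    refine le_antisymm (iSup₂_le fun j hj => absurd hj (Nat.not_le.2 j.isLt)) bot_le
  have hendn : μ[G|𝒢 n] = fun _ => ∫ ω, G ω ∂μ := by rw [h𝒢n]; exact condExp_bot G
  -- entropy functional along the filtration
  set F : ℕ → ℝ := fun t => ∫ ω, (μ[G|𝒢 t]) ω * Real.log ((μ[G|𝒢 t]) ω) ∂μ with hF
  -- the step inequality
  have hstep : ∀ k : Fin n, F (k : ℕ) - F ((k : ℕ) + 1)
      ≤ ∫ ω, G ω * Real.log (G ω) ∂μ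
        - ∫ ω, (μ[G|m k]) ω * Real.log ((μ[G|m k]) ω) ∂μ := by
    intro k
    have hmCle : (⨆ (j : Fin n) (_ : (j : ℕ) < (k : ℕ)),
        MeasurableSpace.comap (X j) inferInstance) ≤ ‹MeasurableSpace Ω› :=
      iSup₂_le fun j _ => (hXmeas j).comap_le
    have hsup : m k = 𝒢 ((k : ℕ) + 1) ⊔ ⨆ (j : Fin n) (_ : (j : ℕ) < (k : ℕ)),
        MeasurableSpace.comap (X j) inferInstance := by
      rw [hm k]
      refine le_antisymm (iSup₂_le fun j hj => ?_)
        (sup_le (iSup₂_le fun j hj => ?_) (iSup₂_le fun j hj => ?_))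
      · rcases Nat.lt_or_ge (j : ℕ) (k : ℕ) with h | h
        · exact le_trans (le_iSup₂ (f := fun (j : Fin n) (_ : (j : ℕ) < (k : ℕ)) =>
            MeasurableSpace.comap (X j) inferInstance) j h) le_sup_right
        · have h' : (k : ℕ) + 1 ≤ (j : ℕ) := by
            rcases Nat.eq_or_lt_of_le h with h'' | h''
            · exact absurd (Fin.ext h''.symm) hj
            · omega
          exact le_trans (le_iSup₂ (f := fun (j : Fin n) (_ : (k : ℕ) + 1 ≤ (j : ℕ)) =>
            MeasurableSpace.comap (X j) inferInstance) j h') le_sup_left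
      · exact le_iSup₂ (f := fun (j : Fin n) (_ : j ≠ k) =>
          MeasurableSpace.comap (X j) inferInstance) j (Fin.ne_of_val_ne (by omega))
      · exact le_iSup₂ (f := fun (j : Fin n) (_ : j ≠ k) =>
          MeasurableSpace.comap (X j) inferInstance) j (Fin.ne_of_val_ne (by omega))
    -- independence of 𝒢 k and the past
    have hiIndep : iIndep (fun j : Fin n =>
        MeasurableSpace.comap (X j) inferInstance) μ :=
      (iIndepFun_iff_iIndep _ _ _).1 hXindep
    have hindep : Indep (𝒢 (k : ℕ)) (⨆ (j : Fin n) (_ : (j : ℕ) < (k : ℕ)),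
        MeasurableSpace.comap (X j) inferInstance) μ := by
      have h := indep_biSup_compl (fun j => (hXmeas j).comap_le) hiIndep
        {j : Fin n | (k : ℕ) ≤ (j : ℕ)}
      have h1 : Indep (𝒢 (k : ℕ))
          (⨆ j ∈ {j : Fin n | (k : ℕ) ≤ (j : ℕ)}ᶜ,
            MeasurableSpace.comap (X j) inferInstance) μ := h
      refine indep_of_indep_of_le_right h1 ?_
      refine iSup₂_le fun j hj => ?_
      refine le_iSup₂ (f := fun (j : Fin n)
        (_ : j ∈ {j : Fin n | (k : ℕ) ≤ (j : ℕ)}ᶜ) =>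
        MeasurableSpace.comap (X j) inferInstance) j ?_
      simp only [Set.mem_compl_iff, Set.mem_setOf_eq, not_le]
      exact hj
    have hBA : 𝒢 ((k : ℕ) + 1) ≤ 𝒢 (k : ℕ) := h𝒢mono _
    exact aux_step2 (h𝒢le (k : ℕ)) (h𝒢le ((k : ℕ) + 1)) hmCle (hmle k) hBA hindep hsup
      hGint hGpos hGlogint
  -- rewriting of the right-hand side
  have hRHSk : ∀ k : Fin n,
      ∫ ω, ((μ[(fun ω' => G ω' * Real.log (G ω'))|m k]) ω
        - (μ[G|m k]) ω * Real.log ((μ[G|m k]) ω)) ∂μ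
      = ∫ ω, G ω * Real.log (G ω) ∂μ
        - ∫ ω, (μ[G|m k]) ω * Real.log ((μ[G|m k]) ω) ∂μ := by
    intro k
    haveI : IsFiniteMeasure (μ.trim (hmle k)) := isFiniteMeasure_trim _
    rw [integral_sub integrable_condExp
      (aux_entropy_integrable (hmle k) hGint hGpos hGlogint), integral_condExp (hmle k)]
  -- endpoints
  have hF0 : F 0 = ∫ ω, G ω * Real.log (G ω) ∂μ := by
    rw [hF]; simp only [hend0]
  have hFn : F n = (∫ ω, G ω ∂μ) * Real.log (∫ ω, G ω ∂μ) := by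
    rw [hF]; simp only [hendn]
    simp [measure_univ]
  -- conclusion
  calc (∫ ω, G ω * log (G ω) ∂μ) - (∫ ω, G ω ∂μ) * log (∫ ω, G ω ∂μ)
      = F 0 - F n := by rw [hF0, hFn]
    _ = ∑ i ∈ Finset.range n, (F i - F (i + 1)) := (Finset.sum_range_sub' F n).symm
    _ = ∑ k : Fin n, (F (k : ℕ) - F ((k : ℕ) + 1)) :=
        (Fin.sum_univ_eq_sum_range (fun i => F i - F (i + 1)) n).symm
    _ ≤ ∑ k : Fin n, (∫ ω, G ω * Real.log (G ω) ∂μ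
          - ∫ ω, (μ[G|m k]) ω * Real.log ((μ[G|m k]) ω) ∂μ) :=
        Finset.sum_le_sum fun k _ => hstep k
    _ = _ := Finset.sum_congr rfl fun k _ => (hRHSk k).symm
end

section
/- Conditional entropy bound: Let Z be a bounded function of independent X_1,...,X_n, Z_k be σ(X_j : j≠k)-measurable, and λ ∈ ℝ with -λ(Z - Z_k) ≤ 0 a.s. Then H_k(e^{λZ}) ≤ (λ²/2) E_k[e^{λZ}(Z - Z_k)²], where E_k denotes integration over X_k only and H_k(G) = E_k[G log G] - E_k[G] log E_k[G]. -/
open MeasureTheory Real ProbabilityTheory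

lemma exp_neg_le_quad {x : ℝ} (hx : 0 ≤ x) : Real.exp (-x) ≤ 1 - x + x ^ 2 / 2 := by
  set f : ℝ → ℝ := fun t => 1 - t + t ^ 2 / 2 - Real.exp (-t) with hf
  have hd : ∀ t : ℝ, HasDerivAt f (-1 + t + Real.exp (-t)) t := by
    intro t
    have h1 : HasDerivAt (fun t : ℝ => Real.exp (-t)) (-Real.exp (-t)) t := by
      convert (hasDerivAt_neg t).exp using 1; ring
    have h2 : HasDerivAt (fun t : ℝ => 1 - t + t ^ 2 / 2) (-1 + t) t := by
      have := ((hasDerivAt_pow 2 t).div_const 2)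
      have := ((hasDerivAt_const t (1:ℝ)).sub (hasDerivAt_id t)).add this
      exact this.congr_deriv (by push_cast; ring)
    exact (h2.sub h1).congr_deriv (by ring)
  have hmono : MonotoneOn f (Set.Ici 0) := by
    refine monotoneOn_of_deriv_nonneg (convex_Ici 0) ?_ ?_ ?_
    · exact fun t _ => ((hd t).continuousAt).continuousWithinAt
    · exact fun t _ => ((hd t).differentiableAt).differentiableWithinAt
    · intro t ht
      rw [(hd t).deriv]
      have := Real.add_one_le_exp (-t)
      linarith
  have h0 : f 0 ≤ f x := hmono Set.self_mem_Ici hx hx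
  simp [f, Real.exp_zero] at h0
  linarith

lemma key_exp_ineq {x : ℝ} (hx : 0 ≤ x) :
    Real.exp x * x - Real.exp x + 1 ≤ x ^ 2 / 2 * Real.exp x := by
  have h := exp_neg_le_quad hx
  have hpos := Real.exp_pos x
  have h2 := mul_le_mul_of_nonneg_right h hpos.le
  rw [Real.exp_neg, inv_mul_cancel₀ hpos.ne'] at h2
  nlinarith

lemma key_log_ineq {a t : ℝ} (ha : 0 < a) : a * t - a * Real.log a ≤ Real.exp t - a := by
  have h := Real.log_le_sub_one_of_pos (div_pos (Real.exp_pos t) ha)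
  rw [Real.log_div (Real.exp_pos t).ne' ha.ne', Real.log_exp] at h
  have h2 := mul_le_mul_of_nonneg_left h ha.le
  have h3 : a * (Real.exp t / a - 1) = Real.exp t - a := by field_simp
  rw [mul_sub] at h2
  rw [h3] at h2
  linarith

/-- Conditional entropy bound: let `Z = g(X_1, …, X_n)` be a bounded function of independent
random variables, `Z_k` a (bounded) random variable measurable with respect to the σ-algebra
generated by the variables other than `X_k`, and `λ ∈ ℝ` with `-λ (Z - Z_k) ≤ 0` a.s.
Then `H_k(e^{λZ}) ≤ (λ²/2) E_k[e^{λZ} (Z - Z_k)²]` almost surely, where `E_k` is the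
conditional expectation given the other variables and
`H_k(G) = E_k[G log G] - E_k[G] log E_k[G]`. -/
theorem conditional_entropy_bound {Ω : Type*} [MeasurableSpace Ω]
    (μ : Measure Ω) [IsProbabilityMeasure μ]
    {n : ℕ} {𝓧 : Fin n → Type*} [∀ k, MeasurableSpace (𝓧 k)]
    (X : ∀ k, Ω → 𝓧 k) (hXmeas : ∀ k, Measurable (X k))
    (hXindep : iIndepFun X μ)
    (g : (∀ k, 𝓧 k) → ℝ) (hgmeas : Measurable g)
    (Z : Ω → ℝ) (hZ : Z = fun ω => g (fun k => X k ω))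
    (hZbd : ∃ C : ℝ, ∀ ω, |Z ω| ≤ C)
    (k : Fin n)
    -- `m` is the σ-algebra generated by the variables `X_j`, `j ≠ k`
    (m : MeasurableSpace Ω)
    (hm : m = ⨆ (j : Fin n) (_ : j ≠ k), MeasurableSpace.comap (X j) inferInstance)
    (Zk : Ω → ℝ) (hZkmeas : Measurable[m] Zk)
    (hZkbd : ∃ C : ℝ, ∀ ω, |Zk ω| ≤ C)
    (l : ℝ) (hl : ∀ᵐ ω ∂μ, -l * (Z ω - Zk ω) ≤ 0) :
    ∀ᵐ ω ∂μ,
      MeasureTheory.condExp m μ (fun ω' => exp (l * Z ω') * log (exp (l * Z ω'))) ω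
          - MeasureTheory.condExp m μ (fun ω' => exp (l * Z ω')) ω
            * log (MeasureTheory.condExp m μ (fun ω' => exp (l * Z ω')) ω)
        ≤ l ^ 2 / 2
          * MeasureTheory.condExp m μ (fun ω' => exp (l * Z ω') * (Z ω' - Zk ω') ^ 2) ω := by
  rename_i mΩ _ _
  obtain ⟨C, hC⟩ := hZbd
  obtain ⟨D, hD⟩ := hZkbd
  have hmle : m ≤ mΩ := by
    rw [hm]
    exact iSup_le fun j => iSup_le fun _ => (hXmeas j).comap_le
  have hZm : Measurable[mΩ] Z := by
    clear hZkmeas hm hmle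
    clear m
    rw [hZ]; exact hgmeas.comp (measurable_pi_lambda _ hXmeas)
  have hZkm : Measurable[mΩ] Zk := hZkmeas.mono hmle le_rfl
  -- bounds
  have hlZ : ∀ ω, -(|l| * C) ≤ l * Z ω ∧ l * Z ω ≤ |l| * C := by
    intro ω
    constructor
    · nlinarith [abs_le.1 (hC ω), le_abs_self l, neg_abs_le l, abs_nonneg l]
    · nlinarith [abs_le.1 (hC ω), le_abs_self l, neg_abs_le l, abs_nonneg l]
  have hlZk : ∀ ω, |l * Zk ω| ≤ |l| * D := by
    intro ω
    rw [abs_mul]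
    exact mul_le_mul_of_nonneg_left (hD ω) (abs_nonneg l)
  -- integrability helper
  have hbdd_int : ∀ (f : Ω → ℝ), Measurable[mΩ] f → ∀ (B : ℝ), (∀ ω, |f ω| ≤ B) →
      Integrable f μ := by
    intro f hf B hB
    exact Integrable.mono' (integrable_const (μ := μ) B) hf.aestronglyMeasurable (ae_of_all _ fun ω => hB ω)
  set G : Ω → ℝ := fun ω => exp (l * Z ω) with hG
  have hGm : Measurable[mΩ] G := (hZm.const_mul l).exp
  have hGbd : ∀ ω, |G ω| ≤ Real.exp (|l| * C) := fun ω => by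
    rw [abs_of_pos (Real.exp_pos _)]
    exact Real.exp_le_exp.2 (hlZ ω).2
  have hGint : Integrable G μ := hbdd_int G hGm _ hGbd
  set GZ : Ω → ℝ := fun ω => G ω * (l * Z ω) with hGZ
  have hGZint : Integrable GZ μ := by
    refine hbdd_int GZ (hGm.mul (hZm.const_mul l)) (Real.exp (|l| * C) * (|l| * C)) ?_
    intro ω
    rw [abs_mul]
    refine mul_le_mul (hGbd ω) ?_ (abs_nonneg _) (Real.exp_pos _).le
    rw [abs_le]
    exact ⟨(hlZ ω).1, (hlZ ω).2⟩
  set GZk : Ω → ℝ := fun ω => (l * Zk ω) * G ω with hGZk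
  have hGZkint : Integrable GZk μ := by
    refine hbdd_int GZk ((hZkm.const_mul l).mul hGm) (|l| * D * Real.exp (|l| * C)) ?_
    intro ω
    rw [abs_mul]
    exact mul_le_mul (hlZk ω) (hGbd ω) (abs_nonneg _)
      ((abs_nonneg (l * Zk ω)).trans (hlZk ω))
  set EZk : Ω → ℝ := fun ω => exp (l * Zk ω) with hEZk
  have hEZkm : Measurable[m] EZk := Real.measurable_exp.comp (hZkmeas.const_mul l)
  have hEZkm' : Measurable[mΩ] EZk := hEZkm.mono hmle le_rfl
  have hEZkint : Integrable EZk μ := by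
    refine hbdd_int EZk hEZkm' (Real.exp (|l| * D)) ?_
    intro ω
    rw [abs_of_pos (Real.exp_pos _)]
    exact Real.exp_le_exp.2 ((le_abs_self _).trans (hlZk ω))
  set Gsq : Ω → ℝ := fun ω => G ω * (Z ω - Zk ω) ^ 2 with hGsq
  have hGsqint : Integrable Gsq μ := by
    refine hbdd_int Gsq (hGm.mul ((hZm.sub hZkm).pow_const 2)) (Real.exp (|l| * C) * (C + D) ^ 2) ?_
    intro ω
    rw [abs_mul]
    refine mul_le_mul (hGbd ω) ?_ (abs_nonneg _) (Real.exp_pos _).le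
    rw [abs_pow]
    have h1 : |Z ω - Zk ω| ≤ C + D := (abs_sub (Z ω) (Zk ω)).trans (add_le_add (hC ω) (hD ω))
    exact pow_le_pow_left₀ (abs_nonneg _) h1 2
  set F : Ω → ℝ := fun ω => GZ ω - GZk ω - G ω + EZk ω with hF
  have hFint : Integrable F μ := ((hGZint.sub hGZkint).sub hGint).add hEZkint
  -- decomposition of condexp F
  have hpull : μ[(fun ω => l * Zk ω) * G|m] =ᵐ[μ] (fun ω => l * Zk ω) * μ[G|m] :=
    condExp_mul_of_stronglyMeasurable_left ((hZkmeas.const_mul l).stronglyMeasurable)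
      (by exact hGZkint) hGint
  have hEZkfix : μ[EZk|m] = EZk :=
    condExp_of_stronglyMeasurable (μ := μ) hmle hEZkm.stronglyMeasurable hEZkint
  have hdecomp : μ[F|m] =ᵐ[μ]
      fun ω => (μ[GZ|m]) ω - l * Zk ω * (μ[G|m]) ω - (μ[G|m]) ω + EZk ω := by
    have h1 : μ[F|m] =ᵐ[μ] μ[GZ - GZk - G|m] + μ[EZk|m] :=
      condExp_add ((hGZint.sub hGZkint).sub hGint) hEZkint m
    have h2 : μ[GZ - GZk - G|m] =ᵐ[μ] μ[GZ - GZk|m] - μ[G|m] :=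
      condExp_sub (hGZint.sub hGZkint) hGint m
    have h3 : μ[GZ - GZk|m] =ᵐ[μ] μ[GZ|m] - μ[GZk|m] := condExp_sub hGZint hGZkint m
    have h4 : μ[GZk|m] =ᵐ[μ] (fun ω => l * Zk ω) * μ[G|m] := hpull
    filter_upwards [h1, h2, h3, h4] with ω e1 e2 e3 e4
    have e5 := congrFun hEZkfix ω
    simp only [Pi.add_apply, Pi.sub_apply, Pi.mul_apply] at *
    rw [e1, e2, e3, e4, e5]
  -- pointwise inequality F ≤ (l^2/2) • Gsq a.e.
  have hptwise : F ≤ᵐ[μ] (l ^ 2 / 2) • Gsq := by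
    filter_upwards [hl] with ω hω
    have hx : 0 ≤ l * Z ω - l * Zk ω := by nlinarith
    have h1 := key_exp_ineq hx
    have e1 : Real.exp (l * Z ω) = Real.exp (l * Zk ω) * Real.exp (l * Z ω - l * Zk ω) := by
      rw [← Real.exp_add]; ring_nf
    have lhs_eq : F ω = Real.exp (l * Zk ω) *
        (Real.exp (l * Z ω - l * Zk ω) * (l * Z ω - l * Zk ω)
          - Real.exp (l * Z ω - l * Zk ω) + 1) := by
      simp only [hF, hGZ, hGZk, hEZk, hG, hGsq]
      rw [e1]; ring
    have rhs_eq : ((l ^ 2 / 2) • Gsq) ω = Real.exp (l * Zk ω) *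
        ((l * Z ω - l * Zk ω) ^ 2 / 2 * Real.exp (l * Z ω - l * Zk ω)) := by
      simp only [Pi.smul_apply, smul_eq_mul, hGsq, hG]
      rw [e1]; ring
    rw [lhs_eq, rhs_eq]
    exact mul_le_mul_of_nonneg_left h1 (Real.exp_pos _).le
  have hmono : μ[F|m] ≤ᵐ[μ] μ[(l ^ 2 / 2) • Gsq|m] :=
    condExp_mono hFint (hGsqint.smul (l ^ 2 / 2)) hptwise
  have hsmul : μ[(l ^ 2 / 2) • Gsq|m] =ᵐ[μ] (l ^ 2 / 2) • μ[Gsq|m] :=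
    condExp_smul (l ^ 2 / 2) Gsq m
  -- positivity of condexp G
  have hposG : ∀ᵐ ω ∂μ, 0 < (μ[G|m]) ω := by
    have hle : (fun _ : Ω => Real.exp (-(|l| * C))) ≤ᵐ[μ] G :=
      ae_of_all _ fun ω => Real.exp_le_exp.2 (hlZ ω).1
    have h1 : μ[fun _ : Ω => Real.exp (-(|l| * C))|m] ≤ᵐ[μ] μ[G|m] :=
      condExp_mono (integrable_const _) hGint hle
    have h2 := condExp_const (μ := μ) hmle (Real.exp (-(|l| * C)))
    filter_upwards [h1] with ω e1
    have e2 := congrFun h2 ω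
    have : Real.exp (-(|l| * C)) ≤ (μ[G|m]) ω := by
      calc Real.exp (-(|l| * C)) = (μ[fun _ : Ω => Real.exp (-(|l| * C))|m]) ω := e2.symm
        _ ≤ (μ[G|m]) ω := e1
    exact lt_of_lt_of_le (Real.exp_pos _) this
  -- rewrite the goal functions
  have hfun1 : (fun ω' => exp (l * Z ω') * log (exp (l * Z ω'))) = GZ := by
    funext ω'; rw [Real.log_exp]
  rw [hfun1]
  filter_upwards [hdecomp, hmono, hsmul, hposG] with ω e1 e2 e3 hpos
  have hlog := key_log_ineq (a := (μ[G|m]) ω) (t := l * Zk ω) hpos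
  have step1 : (μ[GZ|m]) ω - (μ[G|m]) ω * log ((μ[G|m]) ω)
      ≤ (μ[GZ|m]) ω - l * Zk ω * (μ[G|m]) ω - (μ[G|m]) ω + EZk ω := by
    simp only [hEZk]
    nlinarith [hlog]
  have step2 : (μ[GZ|m]) ω - l * Zk ω * (μ[G|m]) ω - (μ[G|m]) ω + EZk ω = (μ[F|m]) ω := e1.symm
  have step3 : (μ[F|m]) ω ≤ ((l ^ 2 / 2) • μ[Gsq|m]) ω := e3 ▸ e2
  have step4 : ((l ^ 2 / 2) • μ[Gsq|m]) ω = l ^ 2 / 2 * (μ[Gsq|m]) ω := rfl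
  linarith [step1, step2.le, step3, step4.le]
end

section
/- Herbst argument (sub-Gaussian MGF bound, lower tail version): If Z is a bounded random variable such that for all λ ≤ 0, λ E[Z e^{λZ}] - E[e^{λZ}] log E[e^{λZ}] ≤ (λ²/2) K E[e^{λZ}] for some constant K ≥ 0, then for all λ ≤ 0, E[e^{λ(Z - E Z)}] ≤ exp(K λ²/2). -/
open MeasureTheory Real

lemma herbst_aux_int {Ω : Type*} [MeasurableSpace Ω] (μ : Measure Ω) [IsProbabilityMeasure μ]
    (Z : Ω → ℝ) (hZmeas : Measurable Z) (C : ℝ) (hC : ∀ ω, |Z ω| ≤ C) (l : ℝ) :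
    Integrable (fun ω => exp (l * Z ω)) μ := by
  refine (integrable_const (exp (|l| * C))).mono'
    ((hZmeas.const_mul l).exp.aestronglyMeasurable) ?_
  filter_upwards with ω
  rw [norm_eq_abs, abs_of_pos (exp_pos _)]
  apply exp_le_exp.2
  calc l * Z ω ≤ |l * Z ω| := le_abs_self _
    _ = |l| * |Z ω| := abs_mul _ _
    _ ≤ |l| * C := mul_le_mul_of_nonneg_left (hC ω) (abs_nonneg _)

lemma herbst_aux_deriv {Ω : Type*} [MeasurableSpace Ω] (μ : Measure Ω) [IsProbabilityMeasure μ]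
    (Z : Ω → ℝ) (hZmeas : Measurable Z) (C : ℝ) (hC0 : 0 ≤ C) (hC : ∀ ω, |Z ω| ≤ C) (l : ℝ) :
    HasDerivAt (fun x => ∫ ω, exp (x * Z ω) ∂μ) (∫ ω, Z ω * exp (l * Z ω) ∂μ) l := by
  have key := hasDerivAt_integral_of_dominated_loc_of_deriv_le (μ := μ)
      (F := fun x ω => exp (x * Z ω)) (F' := fun x ω => Z ω * exp (x * Z ω))
      (x₀ := l) (bound := fun _ => C * exp ((|l| + 1) * C)) (Metric.ball_mem_nhds l one_pos)
      (Filter.Eventually.of_forall fun x =>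
        ((hZmeas.const_mul x).exp.aestronglyMeasurable))
      (herbst_aux_int μ Z hZmeas C hC l)
      ((hZmeas.mul (hZmeas.const_mul l).exp).aestronglyMeasurable)
      ?_ (integrable_const _) ?_
  · exact key.2
  · filter_upwards with ω x hx
    rw [norm_eq_abs, abs_mul, abs_of_pos (exp_pos _)]
    have h1 : |x| ≤ |l| + 1 := by
      have := mem_ball_iff_norm.1 hx
      calc |x| = |l + (x - l)| := by ring_nf
        _ ≤ |l| + |x - l| := abs_add_le _ _
        _ ≤ |l| + 1 := by simp [norm_eq_abs] at this; linarith
    refine mul_le_mul (hC ω) (exp_le_exp.2 ?_) (exp_pos _).le hC0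
    calc x * Z ω ≤ |x * Z ω| := le_abs_self _
      _ = |x| * |Z ω| := abs_mul _ _
      _ ≤ (|l| + 1) * C := mul_le_mul h1 (hC ω) (abs_nonneg _) (by linarith [abs_nonneg l])
  · filter_upwards with ω x _
    have : HasDerivAt (fun x : ℝ => x * Z ω) (Z ω) x := by
      simpa using (hasDerivAt_id x).mul_const (Z ω)
    simpa [mul_comm] using this.exp

/-- Herbst argument (lower tail version): if a bounded random variable `Z` satisfies the
entropy differential inequality
`λ E[Z e^{λZ}] - E[e^{λZ}] log E[e^{λZ}] ≤ (λ²/2) K E[e^{λZ}]` for all `λ ≤ 0`,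
then `E[e^{λ(Z - EZ)}] ≤ exp (K λ² / 2)` for all `λ ≤ 0`. -/
theorem herbst_left {Ω : Type*} [MeasurableSpace Ω]
    (μ : Measure Ω) [IsProbabilityMeasure μ]
    (Z : Ω → ℝ) (hZmeas : Measurable Z) (hZbd : ∃ C : ℝ, ∀ ω, |Z ω| ≤ C)
    (K : ℝ) (hK : 0 ≤ K)
    (hent : ∀ l : ℝ, l ≤ 0 →
      l * ∫ ω, Z ω * exp (l * Z ω) ∂μ
        - (∫ ω, exp (l * Z ω) ∂μ) * Real.log (∫ ω, exp (l * Z ω) ∂μ)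
      ≤ l ^ 2 / 2 * K * ∫ ω, exp (l * Z ω) ∂μ) :
    ∀ l : ℝ, l ≤ 0 →
      ∫ ω, exp (l * (Z ω - ∫ ω', Z ω' ∂μ)) ∂μ ≤ exp (K * l ^ 2 / 2) := by
  obtain ⟨C₀, hC₀⟩ := hZbd
  set C : ℝ := |C₀| with hCdef
  have hC : ∀ ω, |Z ω| ≤ C := fun ω => (hC₀ ω).trans (le_abs_self _)
  have hC0 : 0 ≤ C := abs_nonneg _
  set F : ℝ → ℝ := fun x => ∫ ω, exp (x * Z ω) ∂μ with hFdef
  set G : ℝ → ℝ := fun x => ∫ ω, Z ω * exp (x * Z ω) ∂μ with hGdef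
  set M : ℝ := ∫ ω, Z ω ∂μ with hMdef
  have hFpos : ∀ x, 0 < F x := by
    intro x
    have h1 : exp (-(|x| * C)) ≤ F x := by
      rw [show exp (-(|x| * C)) = ∫ _ω, exp (-(|x| * C)) ∂μ by simp]
      refine integral_mono (integrable_const _) (herbst_aux_int μ Z hZmeas C hC x) fun ω => ?_
      apply exp_le_exp.2
      have h2 : |x * Z ω| ≤ |x| * C := by
        rw [abs_mul]; exact mul_le_mul_of_nonneg_left (hC ω) (abs_nonneg _)
      linarith [neg_abs_le (x * Z ω)]
    linarith [exp_pos (-(|x| * C))]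
  have hF0 : F 0 = 1 := by simp [hFdef]
  have hG0 : G 0 = M := by simp [hGdef, hMdef]
  have hFd : ∀ x, HasDerivAt F (G x) x := herbst_aux_deriv μ Z hZmeas C hC0 hC
  set ψ : ℝ → ℝ := fun x => x * M + K * x ^ 2 / 2 - Real.log (F x) with hψdef
  have hψd : ∀ x, HasDerivAt ψ (M + K * x - G x / F x) x := by
    intro x
    have h1 : HasDerivAt (fun x : ℝ => x * M + K * x ^ 2 / 2) (M + K * x) x := by
      have := ((hasDerivAt_id x).mul_const M).add
        (((hasDerivAt_pow 2 x).const_mul K).div_const 2)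
      refine this.congr_deriv ?_
      ring
    exact h1.sub ((hFd x).log (hFpos x).ne')
  have hψ0 : ψ 0 = 0 := by simp [hψdef, hF0]
  have hψd0 : HasDerivAt ψ 0 0 := by
    have := hψd 0
    rw [hG0, hF0] at this
    simpa using this
  set h : ℝ → ℝ := fun x => ψ x / x with hhdef
  have hnum : ∀ x ≤ 0, 0 ≤ K * x ^ 2 / 2 - x * G x / F x + Real.log (F x) := by
    intro x hx
    have h1 := hent x hx
    have hFx := hFpos x
    have h2 : x * G x / F x ≤ K * x ^ 2 / 2 + Real.log (F x) := by
      rw [div_le_iff₀ hFx]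
      nlinarith [h1]
    linarith
  have hhd : ∀ x : ℝ, x < 0 → HasDerivAt h
      ((K * x ^ 2 / 2 - x * G x / F x + Real.log (F x)) / x ^ 2) x := by
    intro x hx
    have := (hψd x).div (hasDerivAt_id x) hx.ne
    refine this.congr_deriv ?_
    simp only [hψdef, id]
    field_simp
    ring
  have hmono : MonotoneOn h (Set.Iio 0) := by
    refine monotoneOn_of_deriv_nonneg (convex_Iio 0) ?_ ?_ ?_
    · exact fun x hx => (hhd x hx).continuousAt.continuousWithinAt
    · rw [interior_Iio]
      exact fun x hx => (hhd x hx).differentiableAt.differentiableWithinAt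
    · rw [interior_Iio]
      intro x hx
      rw [(hhd x hx).deriv]
      exact div_nonneg (hnum x hx.le) (sq_nonneg x)
  have hlim : Filter.Tendsto h (nhdsWithin 0 (Set.Iio 0)) (nhds 0) := by
    have h1 := (hasDerivAt_iff_tendsto_slope.1 hψd0).mono_left
      (nhdsWithin_mono 0 (fun x (hx : x ∈ Set.Iio 0) => ne_of_lt hx))
    refine h1.congr' ?_
    filter_upwards [self_mem_nhdsWithin] with x hx
    simp [slope, hψ0, hhdef, div_eq_inv_mul]
  intro l hl
  rcases eq_or_lt_of_le hl with rfl | hl'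
  · simp
  have hlne : l ≠ 0 := hl'.ne
  have hle : h l ≤ 0 := by
    refine ge_of_tendsto hlim ?_
    filter_upwards [Ioo_mem_nhdsLT_of_mem (Set.mem_Ioc.2 ⟨hl', le_refl (0:ℝ)⟩)] with t ht
    exact hmono hl' ht.2 ht.1.le
  have hψnn : 0 ≤ ψ l := by
    have heq : ψ l = h l * l := by
      simp only [hhdef]
      field_simp
    rw [heq]
    nlinarith [hle, hl'.le]
  have hlog : Real.log (F l) ≤ l * M + K * l ^ 2 / 2 := by
    simp only [hψdef] at hψnn
    linarith
  have hFle : F l ≤ exp (l * M + K * l ^ 2 / 2) :=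
    (Real.log_le_iff_le_exp (hFpos l)).1 hlog
  calc ∫ ω, exp (l * (Z ω - M)) ∂μ = F l / exp (l * M) := by
        simp_rw [mul_sub, exp_sub]
        rw [integral_div]
    _ ≤ exp (l * M + K * l ^ 2 / 2) / exp (l * M) := by gcongr
    _ = exp (K * l ^ 2 / 2) := by
        rw [exp_add]
        field_simp
end

section
/- Column-stability of eigenvalues: with Z(X) = λ_k((1/N) X X*) for an n×N complex matrix X with entries bounded in modulus by 1, and Z_{t_0}^{(M)} = inf over admissible replacement columns x_{t_0} (entries bounded by 1) of Z of the modified matrix, one has 0 ≤ Z(X) - Z_{t_0}^{(M)} ≤ n/N; consequently Σ_{t_0=1}^N (Z - Z_{t_0}^{(M)})² ≤ n²/N. -/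
open Matrix

/-- The `k`-th largest entry of a real tuple (`k = 0` gives the largest). -/
noncomputable def sortedDesc {n : ℕ} (v : Fin n → ℝ) (k : Fin n) : ℝ :=
  (v ∘ Tuple.sort v) k.rev

/-- The scaled sample covariance matrix `(1/N) X Xᴴ` is Hermitian. -/
theorem covMatrix_isHermitian {n N : ℕ} (X : Matrix (Fin n) (Fin N) ℂ) :
    (((N : ℂ)⁻¹) • (X * Xᴴ)).IsHermitian := by
  unfold Matrix.IsHermitian
  rw [Matrix.conjTranspose_smul, (Matrix.isHermitian_mul_conjTranspose_self X).eq]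
  norm_num

/-- The `k`-th largest eigenvalue of the sample covariance matrix `(1/N) X Xᴴ`. -/
noncomputable def covEV {n N : ℕ} (X : Matrix (Fin n) (Fin N) ℂ) (k : Fin n) : ℝ :=
  sortedDesc (covMatrix_isHermitian X).eigenvalues k


lemma euclid_normsq {n : ℕ} (x : EuclideanSpace ℂ (Fin n)) : ‖x‖^2 = ∑ i, ‖x i‖^2 := by
  rw [EuclideanSpace.norm_eq, Real.sq_sqrt (by positivity)]

lemma eigen_apply {n : ℕ} {A : Matrix (Fin n) (Fin n) ℂ} (hA : A.IsHermitian) (i : Fin n) :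
    Matrix.toEuclideanLin A (hA.eigenvectorBasis i) = hA.eigenvalues i • hA.eigenvectorBasis i := by
  apply (WithLp.equiv 2 _).injective
  simp only [toEuclideanLin_apply, Equiv.apply_symm_apply]
  rw [hA.mulVec_eigenvectorBasis]
  rfl

lemma quad_repr {n : ℕ} {A : Matrix (Fin n) (Fin n) ℂ} (hA : A.IsHermitian)
    (w : EuclideanSpace ℂ (Fin n)) :
    RCLike.re (inner ℂ w (Matrix.toEuclideanLin A w) : ℂ)
      = ∑ i, hA.eigenvalues i * ‖hA.eigenvectorBasis.repr w i‖^2 := by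
  set b := hA.eigenvectorBasis with hb
  have hT : Matrix.toEuclideanLin A w = ∑ i, (b.repr w i * hA.eigenvalues i) • b i := by
    conv_lhs => rw [← b.sum_repr w]
    rw [map_sum]
    refine Finset.sum_congr rfl fun i _ => ?_
    rw [_root_.map_smul, eigen_apply hA, RCLike.real_smul_eq_coe_smul (K := ℂ), smul_smul]
    rfl
  rw [hT, inner_sum]
  simp only [inner_smul_right]
  have hc : ∀ i, (inner ℂ w (b i) : ℂ) = starRingEnd ℂ (b.repr w i) := fun i => by
    rw [← inner_conj_symm, b.repr_apply_apply]
  rw [map_sum]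
  refine Finset.sum_congr rfl fun i _ => ?_
  rw [hc]
  have : b.repr w i * ↑(hA.eigenvalues i) * starRingEnd ℂ (b.repr w i)
      = (hA.eigenvalues i : ℂ) * (b.repr w i * starRingEnd ℂ (b.repr w i)) := by ring
  rw [this, Complex.mul_conj, ← Complex.ofReal_mul, RCLike.re_to_complex, Complex.ofReal_re,
    Complex.normSq_eq_norm_sq]

lemma parseval_sum {n : ℕ} (b : OrthonormalBasis (Fin n) ℂ (EuclideanSpace ℂ (Fin n)))
    (w : EuclideanSpace ℂ (Fin n)) : ∑ i, ‖b.repr w i‖^2 = ‖w‖^2 := by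
  rw [← euclid_normsq (b.repr w), b.repr.norm_map]

lemma repr_zero_of_mem_span {n : ℕ} (b : OrthonormalBasis (Fin n) ℂ (EuclideanSpace ℂ (Fin n)))
    (S : Finset (Fin n)) {w : EuclideanSpace ℂ (Fin n)}
    (hw : w ∈ Submodule.span ℂ (⇑b '' ↑S)) {i : Fin n} (hi : i ∉ S) : b.repr w i = 0 := by
  rw [b.repr_apply_apply]
  induction hw using Submodule.span_induction with
  | mem x hx =>
    obtain ⟨j, hj, rfl⟩ := hx
    exact b.orthonormal.2 (fun h => hi (h ▸ hj))
  | zero => simp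
  | add x y hx hy ihx ihy => simp [inner_add_right, ihx, ihy]
  | smul a x hx ihx => simp [inner_smul_right, ihx]

lemma finrank_span_orthonormal {n : ℕ} (b : OrthonormalBasis (Fin n) ℂ (EuclideanSpace ℂ (Fin n)))
    (S : Finset (Fin n)) :
    Module.finrank ℂ (Submodule.span ℂ (⇑b '' ↑S)) = S.card := by
  have h1 : ⇑b '' ↑S = Set.range (fun j : {x // x ∈ S} => b j) := by
    ext x; simp [Set.mem_image]
  rw [h1]
  exact (finrank_span_eq_card
    ((b.orthonormal.linearIndependent).comp Subtype.val Subtype.val_injective)).trans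
    (Fintype.card_coe S)


lemma weyl_le {n : ℕ} {A B : Matrix (Fin n) (Fin n) ℂ} (hA : A.IsHermitian) (hB : B.IsHermitian)
    {c : ℝ}
    (h : ∀ v : EuclideanSpace ℂ (Fin n),
      RCLike.re (inner ℂ v (Matrix.toEuclideanLin A v) : ℂ)
        ≤ RCLike.re (inner ℂ v (Matrix.toEuclideanLin B v) : ℂ) + c * ‖v‖^2)
    (k : Fin n) :
    sortedDesc hA.eigenvalues k ≤ sortedDesc hB.eigenvalues k + c := by
  classical
  set bA := hA.eigenvectorBasis with hbA
  set bB := hB.eigenvectorBasis with hbB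
  set σA := Tuple.sort hA.eigenvalues with hσA
  set σB := Tuple.sort hB.eigenvalues with hσB
  set SA : Finset (Fin n) := (Finset.Ici k.rev).image σA with hSA
  set SB : Finset (Fin n) := (Finset.Iic k.rev).image σB with hSB
  have hkrev : (k.rev : ℕ) = n - (k.val + 1) := Fin.val_rev k
  have cardSA : SA.card = k.val + 1 := by
    rw [hSA, Finset.card_image_of_injective _ σA.injective, Fin.card_Ici]
    have := k.isLt; omega
  have cardSB : SB.card = n - k.val := by
    rw [hSB, Finset.card_image_of_injective _ σB.injective, Fin.card_Iic]
    have := k.isLt; omega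
  set U := Submodule.span ℂ (⇑bA '' ↑SA) with hU
  set V := Submodule.span ℂ (⇑bB '' ↑SB) with hV
  have hrU : Module.finrank ℂ U = k.val + 1 := by rw [hU, finrank_span_orthonormal, cardSA]
  have hrV : Module.finrank ℂ V = n - k.val := by rw [hV, finrank_span_orthonormal, cardSB]
  -- U ⊓ V contains a nonzero vector
  have hne : U ⊓ V ≠ ⊥ := by
    intro h0
    have hsum := Submodule.finrank_sup_add_finrank_inf_eq U V
    rw [h0, finrank_bot, hrU, hrV] at hsum
    have hle : Module.finrank ℂ ↥(U ⊔ V) ≤ n := by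
      have := Submodule.finrank_le (U ⊔ V)
      rwa [finrank_euclideanSpace_fin] at this
    have := k.isLt; omega
  obtain ⟨w, hwUV, hw0⟩ := Submodule.exists_mem_ne_zero_of_ne_bot hne
  have hwU : w ∈ U := hwUV.1
  have hwV : w ∈ V := hwUV.2
  have hwn : (0:ℝ) < ‖w‖^2 := pow_pos (norm_pos_iff.2 hw0) 2
  -- lower bound for A
  have hqA : sortedDesc hA.eigenvalues k * ‖w‖^2 ≤ RCLike.re (inner ℂ w (Matrix.toEuclideanLin A w) : ℂ) := by
    rw [quad_repr hA w, ← parseval_sum bA w, Finset.mul_sum]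
    refine Finset.sum_le_sum fun i _ => ?_
    by_cases hi : i ∈ SA
    · refine mul_le_mul_of_nonneg_right ?_ (by positivity)
      obtain ⟨j, hj, rfl⟩ := Finset.mem_image.mp hi
      exact Tuple.monotone_sort hA.eigenvalues (Finset.mem_Ici.mp hj)
    · rw [repr_zero_of_mem_span bA SA hwU hi]
      simp
  -- upper bound for B
  have hqB : RCLike.re (inner ℂ w (Matrix.toEuclideanLin B w) : ℂ) ≤ sortedDesc hB.eigenvalues k * ‖w‖^2 := by
    rw [quad_repr hB w, ← parseval_sum bB w, Finset.mul_sum]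
    refine Finset.sum_le_sum fun i _ => ?_
    by_cases hi : i ∈ SB
    · refine mul_le_mul_of_nonneg_right ?_ (by positivity)
      obtain ⟨j, hj, rfl⟩ := Finset.mem_image.mp hi
      exact Tuple.monotone_sort hB.eigenvalues (Finset.mem_Iic.mp hj)
    · rw [repr_zero_of_mem_span bB SB hwV hi]
      simp
  have := (hqA.trans (h w)).trans (by linarith : RCLike.re (inner ℂ w (Matrix.toEuclideanLin B w) : ℂ) + c * ‖w‖^2 ≤ (sortedDesc hB.eigenvalues k + c) * ‖w‖^2)
  exact le_of_mul_le_mul_right this hwn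


lemma inner_toEuclideanLin {n : ℕ} (M : Matrix (Fin n) (Fin n) ℂ) (v : EuclideanSpace ℂ (Fin n)) :
    (inner ℂ v (Matrix.toEuclideanLin M v) : ℂ)
      = star (WithLp.equiv 2 (Fin n → ℂ) v) ⬝ᵥ (M *ᵥ (WithLp.equiv 2 (Fin n → ℂ) v)) := by
  rw [toEuclideanLin_apply, PiLp.inner_apply]
  simp [dotProduct, RCLike.inner_apply]
  exact Finset.sum_congr rfl fun _ _ => mul_comm _ _

lemma cov_quad {n N : ℕ} (X : Matrix (Fin n) (Fin N) ℂ) (v : EuclideanSpace ℂ (Fin n)) :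
    RCLike.re (inner ℂ v (Matrix.toEuclideanLin (((N : ℂ)⁻¹) • (X * Xᴴ)) v) : ℂ)
      = (N:ℝ)⁻¹ * ∑ t, ‖(Xᴴ *ᵥ (WithLp.equiv 2 (Fin n → ℂ) v)) t‖^2 := by
  set v' := WithLp.equiv 2 (Fin n → ℂ) v with hv'
  rw [inner_toEuclideanLin]
  rw [Matrix.smul_mulVec, dotProduct_smul]
  rw [← Matrix.mulVec_mulVec, Matrix.dotProduct_mulVec]
  have hst : star v' ᵥ* X = star (Xᴴ *ᵥ v') := by
    rw [Matrix.star_mulVec, conjTranspose_conjTranspose]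
  rw [hst]
  set u := Xᴴ *ᵥ v' with hu
  have h2 : star u ⬝ᵥ u = ((∑ t, ‖u t‖^2 : ℝ) : ℂ) := by
    rw [dotProduct]
    push_cast
    refine Finset.sum_congr rfl fun t _ => ?_
    rw [Pi.star_apply]
    rw [show (star (u t)) = starRingEnd ℂ (u t) from rfl]
    rw [mul_comm, Complex.mul_conj]
    simp [Complex.normSq_eq_norm_sq]
  rw [h2, smul_eq_mul]
  rw [show ((N:ℂ))⁻¹ = (((N:ℝ)⁻¹ : ℝ) : ℂ) by push_cast; ring]
  rw [← Complex.ofReal_mul, RCLike.re_to_complex, Complex.ofReal_re]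

lemma col_quad_bound {n N : ℕ} (X : Matrix (Fin n) (Fin N) ℂ) (hX : ∀ i j, ‖X i j‖ ≤ 1)
    (t₀ : Fin N) (x : Fin n → ℂ) (v' : Fin n → ℂ) :
    ∑ t, ‖(Xᴴ *ᵥ v') t‖^2
      ≤ (∑ t, ‖((Matrix.of fun i t => if t = t₀ then x i else X i t)ᴴ *ᵥ v') t‖^2)
        + n * ∑ i, ‖v' i‖^2 := by
  classical
  set X' : Matrix (Fin n) (Fin N) ℂ := Matrix.of fun i t => if t = t₀ then x i else X i t with hX'
  have hsame : ∀ t, t ≠ t₀ → (Xᴴ *ᵥ v') t = (X'ᴴ *ᵥ v') t := by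
    intro t ht
    simp only [Matrix.mulVec, dotProduct, conjTranspose_apply, hX', Matrix.of_apply, if_neg ht]
  have hbound : ‖(Xᴴ *ᵥ v') t₀‖^2 ≤ n * ∑ i, ‖v' i‖^2 := by
    have h1 : ‖(Xᴴ *ᵥ v') t₀‖ ≤ ∑ i, ‖v' i‖ := by
      simp only [Matrix.mulVec, dotProduct]
      refine (norm_sum_le (Finset.univ : Finset (Fin n)) (fun i => Xᴴ t₀ i * v' i)).trans ?_
      refine Finset.sum_le_sum fun i _ => ?_
      rw [conjTranspose_apply, norm_mul]
      calc ‖star (X i t₀)‖ * ‖v' i‖ ≤ 1 * ‖v' i‖ := by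
            refine mul_le_mul_of_nonneg_right ?_ (norm_nonneg _)
            rw [norm_star]; exact hX i t₀
        _ = ‖v' i‖ := one_mul _
    calc ‖(Xᴴ *ᵥ v') t₀‖^2 ≤ (∑ i, ‖v' i‖)^2 := by
          refine pow_le_pow_left₀ (norm_nonneg _) h1 2
      _ ≤ (Finset.univ.card : ℝ) * ∑ i, ‖v' i‖^2 := sq_sum_le_card_mul_sum_sq
      _ = n * ∑ i, ‖v' i‖^2 := by rw [Finset.card_univ, Fintype.card_fin]
  rw [← Finset.sum_erase_add _ _ (Finset.mem_univ t₀), ← Finset.sum_erase_add _ _ (Finset.mem_univ t₀)]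
  have heq : ∑ t ∈ Finset.univ.erase t₀, ‖(Xᴴ *ᵥ v') t‖^2
      = ∑ t ∈ Finset.univ.erase t₀, ‖(X'ᴴ *ᵥ v') t‖^2 :=
    Finset.sum_congr rfl fun t ht => by rw [hsame t (Finset.ne_of_mem_erase ht)]
  rw [heq]
  have : (0:ℝ) ≤ ‖(X'ᴴ *ᵥ v') t₀‖^2 := by positivity
  linarith


/-- Column-stability of eigenvalues: for an `n × N` complex matrix `X` with entries of
modulus at most `1`, let `Z = λ_k((1/N) X Xᴴ)` and let `Z_{t₀}^{(M)}` be the infimum of the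
corresponding eigenvalue over all replacements of column `t₀` by a vector with entries of
modulus at most `1`. Then `0 ≤ Z - Z_{t₀}^{(M)} ≤ n/N` for every `t₀`, and consequently
`∑_{t₀} (Z - Z_{t₀}^{(M)})² ≤ n²/N`. -/
theorem covEV_column_stability {n N : ℕ} (X : Matrix (Fin n) (Fin N) ℂ)
    (hX : ∀ i j, ‖X i j‖ ≤ 1) (k : Fin n)
    (ZM : Fin N → ℝ)
    (hZM : ∀ t₀, ZM t₀ = sInf {r : ℝ | ∃ x : Fin n → ℂ, (∀ l, ‖x l‖ ≤ 1) ∧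
        r = covEV (Matrix.of fun i t => if t = t₀ then x i else X i t) k}) :
    (∀ t₀ : Fin N, 0 ≤ covEV X k - ZM t₀ ∧ covEV X k - ZM t₀ ≤ (n : ℝ) / N) ∧
      ∑ t₀ : Fin N, (covEV X k - ZM t₀) ^ 2 ≤ (n : ℝ) ^ 2 / N := by
  classical
  have key : ∀ t₀ : Fin N, 0 ≤ covEV X k - ZM t₀ ∧ covEV X k - ZM t₀ ≤ (n : ℝ) / N := by
    intro t₀
    have hNpos : 0 < (N : ℝ) := by exact_mod_cast t₀.pos
    set S : Set ℝ := {r : ℝ | ∃ x : Fin n → ℂ, (∀ l, ‖x l‖ ≤ 1) ∧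
        r = covEV (Matrix.of fun i t => if t = t₀ then x i else X i t) k} with hS
    have hmem : covEV X k ∈ S := by
      refine ⟨fun i => X i t₀, fun l => hX l t₀, ?_⟩
      have hXX : (Matrix.of fun i t => if t = t₀ then X i t₀ else X i t) = X := by
        ext i t
        simp only [Matrix.of_apply]
        split
        · next h => rw [h]
        · rfl
      rw [hXX]
    have hlb : ∀ r ∈ S, covEV X k - (n : ℝ) / N ≤ r := by
      rintro r ⟨x, hx, rfl⟩
      set X' : Matrix (Fin n) (Fin N) ℂ :=
        Matrix.of fun i t => if t = t₀ then x i else X i t with hX'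
      have hw : sortedDesc (covMatrix_isHermitian X).eigenvalues k
          ≤ sortedDesc (covMatrix_isHermitian X').eigenvalues k + (n : ℝ) / N := by
        refine weyl_le (covMatrix_isHermitian X) (covMatrix_isHermitian X') ?_ k
        intro v
        rw [cov_quad X v, cov_quad X' v]
        set v' := WithLp.equiv 2 (Fin n → ℂ) v with hv'
        have hb := col_quad_bound X hX t₀ x v'
        have hnv : ‖v‖ ^ 2 = ∑ i, ‖v' i‖ ^ 2 := by
          rw [euclid_normsq v]
          rfl
        rw [hnv]
        have hinv : (0 : ℝ) ≤ (N : ℝ)⁻¹ := by positivity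
        have := mul_le_mul_of_nonneg_left hb hinv
        rw [mul_add] at this
        calc (N : ℝ)⁻¹ * ∑ t, ‖(Xᴴ *ᵥ v') t‖ ^ 2
            ≤ (N : ℝ)⁻¹ * (∑ t, ‖(X'ᴴ *ᵥ v') t‖ ^ 2)
              + (N : ℝ)⁻¹ * ((n : ℝ) * ∑ i, ‖v' i‖ ^ 2) := this
          _ = (N : ℝ)⁻¹ * (∑ t, ‖(X'ᴴ *ᵥ v') t‖ ^ 2)
              + (n : ℝ) / N * ∑ i, ‖v' i‖ ^ 2 := by ring
      have : covEV X k ≤ covEV X' k + (n : ℝ) / N := hw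
      linarith [this]
    have hbdd : BddBelow S := ⟨covEV X k - (n : ℝ) / N, fun r hr => hlb r hr⟩
    have h1 : ZM t₀ ≤ covEV X k := by rw [hZM t₀]; exact csInf_le hbdd hmem
    have h2 : covEV X k - (n : ℝ) / N ≤ ZM t₀ := by
      rw [hZM t₀]; exact le_csInf ⟨_, hmem⟩ hlb
    exact ⟨by linarith, by linarith⟩
  refine ⟨key, ?_⟩
  rcases Nat.eq_zero_or_pos N with hN | hN
  · subst hN
    simp
  · have hNpos : (0 : ℝ) < N := by exact_mod_cast hN
    calc ∑ t₀ : Fin N, (covEV X k - ZM t₀) ^ 2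
        ≤ ∑ _t₀ : Fin N, ((n : ℝ) / N) ^ 2 :=
          Finset.sum_le_sum fun t₀ _ =>
            pow_le_pow_left₀ (key t₀).1 (key t₀).2 2
      _ = (N : ℝ) * ((n : ℝ) / N) ^ 2 := by
          rw [Finset.sum_const, Finset.card_univ, Fintype.card_fin, nsmul_eq_mul]
      _ = (n : ℝ) ^ 2 / N := by field_simp
end
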